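/- arXiv:1211.1474 — 12 statements merged into one kernel-verified Lean document; each statement's English description precedes it below -/
import Mathlib

section
/- Let Ω ⊆ ℝ^m be an open set, let u, v ∈ C²(Ω) be real-valued and let F ∈ C¹(Ω, ℝ^m). Let p ∈ Ω be a point with ∇u(p) + F(p) ≠ 0 and ∇v(p) + F(p) ≠ 0. Suppose that N_F(u)(p) = N_F(v)(p) and that the total derivatives of the maps N_F(u) and N_F(v) (defined on a neighborhood of p) coincide at p. If the skew-symmetric matrix (h_{IJ}(p)) has rank at least 3, then ∇u(p) = ∇v(p). -/
open scoped RealInnerProductSpace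

section aux
variable {E : Type*} [NormedAddCommGroup E] [InnerProductSpace ℝ E]

lemma normalize_fderiv {A : E → E} {A' : E →L[ℝ] E} {p : E}
    (hA : HasFDerivAt A A' p) (ha : A p ≠ 0) (h : E) :
    fderiv ℝ (fun x => ‖A x‖⁻¹ • A x) p h
      = ‖A p‖⁻¹ • A' h - ((‖A p‖ ^ 3)⁻¹ * ⟪A p, A' h⟫) • A p := by
  have hr0 : ‖A p‖ ≠ 0 := norm_ne_zero_iff.mpr ha
  have hrpos : 0 < ‖A p‖ := norm_pos_iff.mpr ha
  have hq : HasFDerivAt (fun x => ⟪A x, A x⟫)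
      ((fderivInnerCLM ℝ (A p, A p)).comp (A'.prod A')) p := hA.inner ℝ hA
  have hQ : ⟪A p, A p⟫ = ‖A p‖ ^ 2 := real_inner_self_eq_norm_sq (A p)
  have hQ0 : ⟪A p, A p⟫ ≠ 0 := by rw [hQ]; positivity
  have hsqrt : HasDerivAt Real.sqrt (1 / (2 * Real.sqrt ⟪A p, A p⟫)) ⟪A p, A p⟫ :=
    Real.hasDerivAt_sqrt hQ0
  have hnorm : HasFDerivAt (fun x => ‖A x‖)
      ((1 / (2 * Real.sqrt ⟪A p, A p⟫)) •
        ((fderivInnerCLM ℝ (A p, A p)).comp (A'.prod A'))) p := by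
    have h1 := hsqrt.comp_hasFDerivAt p hq
    have h2 : (Real.sqrt ∘ fun x => ⟪A x, A x⟫) = fun x => ‖A x‖ := by
      funext x; exact (norm_eq_sqrt_real_inner (A x)).symm
    rwa [h2] at h1
  have hinv : HasFDerivAt (fun x => ‖A x‖⁻¹)
      ((-(‖A p‖ ^ 2)⁻¹) • ((1 / (2 * Real.sqrt ⟪A p, A p⟫)) •
        ((fderivInnerCLM ℝ (A p, A p)).comp (A'.prod A')))) p := by
    have h1 := (hasDerivAt_inv hr0).comp_hasFDerivAt p hnorm
    have h2 : ((fun y => y⁻¹) ∘ fun x => ‖A x‖) = fun x => ‖A x‖⁻¹ := rfl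
    rwa [h2] at h1
  have hsm : HasFDerivAt (fun x => ‖A x‖⁻¹ • A x) _ p := hinv.smul hA
  rw [hsm.fderiv]
  have hsqrtQ : Real.sqrt ⟪A p, A p⟫ = ‖A p‖ := by
    rw [hQ]; exact Real.sqrt_sq hrpos.le
  simp only [ContinuousLinearMap.add_apply, ContinuousLinearMap.coe_smul', Pi.smul_apply,
    ContinuousLinearMap.smulRight_apply, ContinuousLinearMap.comp_apply,
    ContinuousLinearMap.prod_apply, fderivInnerCLM_apply, hsqrtQ, smul_eq_mul]
  rw [real_inner_comm (A' h) (A p)]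
  match_scalars <;> field_simp <;> ring


noncomputable def toDualSymmReal (E : Type*) [NormedAddCommGroup E] [InnerProductSpace ℝ E]
    [CompleteSpace E] : StrongDual ℝ E →L[ℝ] E :=
  LinearMap.mkContinuous
    { toFun := fun ℓ => (InnerProductSpace.toDual ℝ E).symm ℓ
      map_add' := fun ℓ₁ ℓ₂ => map_add _ _ _
      map_smul' := fun c ℓ => by
        simp [LinearIsometryEquiv.map_smulₛₗ] }
    1 (fun ℓ => by simp)

lemma gradient_fderiv_symm [CompleteSpace E] {u : E → ℝ} {p : E} (hu : ContDiffAt ℝ 2 u p) :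
    DifferentiableAt ℝ (gradient u) p ∧
      ∀ h y : E, ⟪fderiv ℝ (gradient u) p h, y⟫ = ⟪fderiv ℝ (gradient u) p y, h⟫ := by
  have hd2 : DifferentiableAt ℝ (fderiv ℝ u) p :=
    (hu.fderiv_right (m := 1) (by norm_num)).differentiableAt one_ne_zero
  have hgt : HasFDerivAt (gradient u)
      ((toDualSymmReal E).comp (fderiv ℝ (fderiv ℝ u) p)) p := by
    have := (toDualSymmReal E).hasFDerivAt.comp p hd2.hasFDerivAt
    exact this
  refine ⟨hgt.differentiableAt, fun h y => ?_⟩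
  have hsymm := hu.isSymmSndFDerivAt (by simp [minSmoothness_of_isRCLikeNormedField])
  rw [hgt.fderiv]
  simp only [ContinuousLinearMap.comp_apply]
  have happ : ∀ (ℓ : StrongDual ℝ E) (z : E), ⟪toDualSymmReal E ℓ, z⟫ = ℓ z := by
    intro ℓ z
    exact InnerProductSpace.toDual_symm_apply
  rw [happ, happ]
  exact hsymm h y

end aux

lemma matrix_rank_add_le {k : ℕ} (A B : Matrix (Fin k) (Fin k) ℝ) :
    (A + B).rank ≤ A.rank + B.rank := by
  classical
  have hle : LinearMap.range (A + B).mulVecLin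
      ≤ LinearMap.range A.mulVecLin ⊔ LinearMap.range B.mulVecLin := by
    rintro x ⟨y, rfl⟩
    rw [Matrix.mulVecLin_add, LinearMap.add_apply]
    exact Submodule.add_mem_sup (LinearMap.mem_range_self _ y) (LinearMap.mem_range_self _ y)
  exact (Submodule.finrank_mono hle).trans
    (Submodule.finrank_add_le_finrank_add_finrank _ _)

lemma rank_skew_outer {k : ℕ} (w x : Fin k → ℝ) :
    (Matrix.of fun I J => w I * x J - x I * w J : Matrix (Fin k) (Fin k) ℝ).rank ≤ 2 := by
  have hM : (Matrix.of fun I J => w I * x J - x I * w J : Matrix (Fin k) (Fin k) ℝ)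
      = Matrix.vecMulVec w x + Matrix.vecMulVec (-x) w := by
    ext I J
    simp [Matrix.vecMulVec_apply]
    ring
  have h1 : ∀ (w' x' : Fin k → ℝ), (Matrix.vecMulVec w' x').rank ≤ 1 := by
    intro w' x'
    rw [Matrix.vecMulVec_eq Unit]
    exact (Matrix.rank_mul_le_left _ _).trans
      ((Matrix.rank_le_card_width _).trans (by simp))
  rw [hM]
  calc (Matrix.vecMulVec w x + Matrix.vecMulVec (-x) w).rank
      ≤ (Matrix.vecMulVec w x).rank + (Matrix.vecMulVec (-x) w).rank :=
        matrix_rank_add_le _ _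
    _ ≤ 1 + 1 := add_le_add (h1 _ _) (h1 _ _)
    _ = 2 := rfl

/-- Partial derivative `∂_I f` at `p` of a scalar function on `ℝ^m`. -/
noncomputable def pd {m : ℕ} (f : EuclideanSpace ℝ (Fin m) → ℝ)
    (p : EuclideanSpace ℝ (Fin m)) (I : Fin m) : ℝ :=
  fderiv ℝ f p (EuclideanSpace.single I 1)

/-- `h_{IJ} := ∂_I F_J − ∂_J F_I` for a vector field `F` on `ℝ^m`. -/
noncomputable def hmat {m : ℕ} (F : EuclideanSpace ℝ (Fin m) → EuclideanSpace ℝ (Fin m))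
    (p : EuclideanSpace ℝ (Fin m)) (I J : Fin m) : ℝ :=
  pd (fun x => F x J) p I - pd (fun x => F x I) p J

/-- If `u, v ∈ C²(Ω)`, `F ∈ C¹(Ω, ℝ^m)`, `p ∈ Ω` is nonsingular for both `u` and `v`,
the horizontal normals `N_F(u)`, `N_F(v)` agree at `p`, their total derivatives agree at `p`,
and `rank (h_{IJ}(p)) ≥ 3`, then `∇u(p) = ∇v(p)`. -/
theorem stmt_0 {m : ℕ} (Ω : Set (EuclideanSpace ℝ (Fin m))) (hΩ : IsOpen Ω)
    (u v : EuclideanSpace ℝ (Fin m) → ℝ)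
    (F : EuclideanSpace ℝ (Fin m) → EuclideanSpace ℝ (Fin m))
    (hu : ContDiffOn ℝ 2 u Ω) (hv : ContDiffOn ℝ 2 v Ω) (hF : ContDiffOn ℝ 1 F Ω)
    (p : EuclideanSpace ℝ (Fin m)) (hp : p ∈ Ω)
    (hup : gradient u p + F p ≠ 0) (hvp : gradient v p + F p ≠ 0)
    (hN : ‖gradient u p + F p‖⁻¹ • (gradient u p + F p)
        = ‖gradient v p + F p‖⁻¹ • (gradient v p + F p))
    (hDN : fderiv ℝ (fun x => ‖gradient u x + F x‖⁻¹ • (gradient u x + F x)) p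
         = fderiv ℝ (fun x => ‖gradient v x + F x‖⁻¹ • (gradient v x + F x)) p)
    (hrank : 3 ≤ (Matrix.of fun I J => hmat F p I J).rank) :
    gradient u p = gradient v p := by
  classical
  have hu2 : ContDiffAt ℝ 2 u p := hu.contDiffAt (hΩ.mem_nhds hp)
  have hv2 : ContDiffAt ℝ 2 v p := hv.contDiffAt (hΩ.mem_nhds hp)
  have hF1 : ContDiffAt ℝ 1 F p := hF.contDiffAt (hΩ.mem_nhds hp)
  have hFd : DifferentiableAt ℝ F p := hF1.differentiableAt one_ne_zero
  obtain ⟨hgu_d, hgu_symm⟩ := gradient_fderiv_symm hu2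
  obtain ⟨hgv_d, hgv_symm⟩ := gradient_fderiv_symm hv2
  set Gu := fderiv ℝ (gradient u) p with hGu
  set Gv := fderiv ℝ (gradient v) p with hGv
  set F' := fderiv ℝ F p with hF'
  have hA : HasFDerivAt (fun x => gradient u x + F x) (Gu + F') p :=
    hgu_d.hasFDerivAt.add hFd.hasFDerivAt
  have hB : HasFDerivAt (fun x => gradient v x + F x) (Gv + F') p :=
    hgv_d.hasFDerivAt.add hFd.hasFDerivAt
  set a := gradient u p + F p with ha
  set b := gradient v p + F p with hb
  set r := ‖a‖ with hr
  set s := ‖b‖ with hs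
  have hr0 : r ≠ 0 := norm_ne_zero_iff.mpr hup
  have hs0 : s ≠ 0 := norm_ne_zero_iff.mpr hvp
  have hE : ∀ h : EuclideanSpace ℝ (Fin m),
      r⁻¹ • (Gu + F') h - ((r ^ 3)⁻¹ * ⟪a, (Gu + F') h⟫) • a
        = s⁻¹ • (Gv + F') h - ((s ^ 3)⁻¹ * ⟪b, (Gv + F') h⟫) • b := fun h =>
    (normalize_fderiv hA hup h).symm.trans
      ((DFunLike.congr_fun hDN h).trans (normalize_fderiv hB hvp h))
  have hEs : ∀ h y : EuclideanSpace ℝ (Fin m),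
      r⁻¹ * (⟪Gu h, y⟫ + ⟪F' h, y⟫) - (r ^ 3)⁻¹ * ⟪a, Gu h + F' h⟫ * ⟪a, y⟫
        = s⁻¹ * (⟪Gv h, y⟫ + ⟪F' h, y⟫) - (s ^ 3)⁻¹ * ⟪b, Gv h + F' h⟫ * ⟪b, y⟫ := by
    intro h y
    have t1 := congrArg (fun z : EuclideanSpace ℝ (Fin m) => ⟪z, y⟫) (hE h)
    simpa only [inner_sub_left, real_inner_smul_left, ContinuousLinearMap.add_apply,
      inner_add_left] using t1
  have hab : a = (r * s⁻¹) • b := by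
    have h1 : r • (r⁻¹ • a) = r • (s⁻¹ • b) := by rw [hN]
    rwa [smul_smul, smul_smul, mul_inv_cancel₀ hr0, one_smul] at h1
  have hinner : ∀ y : EuclideanSpace ℝ (Fin m), ⟪a, y⟫ = r * s⁻¹ * ⟪b, y⟫ := by
    intro y
    rw [hab, real_inner_smul_left]
  -- coordinate computations
  have hsingle : ∀ (z : EuclideanSpace ℝ (Fin m)) (K : Fin m),
      ⟪z, EuclideanSpace.single K (1 : ℝ)⟫ = z K := by
    intro z K
    rw [EuclideanSpace.inner_single_right]
    simp
  have hproj : ∀ K : Fin m, fderiv ℝ (fun x => F x K) p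
      = (EuclideanSpace.proj K).comp F' := by
    intro K
    have h1 : (fun x => F x K) = (⇑(EuclideanSpace.proj (𝕜 := ℝ) K) ∘ F) := rfl
    rw [h1, hF']
    exact ((EuclideanSpace.proj K).hasFDerivAt.comp p hFd.hasFDerivAt).fderiv
  have hmat_eq : ∀ I J : Fin m, hmat F p I J
      = ⟪F' (EuclideanSpace.single I (1 : ℝ)), EuclideanSpace.single J (1 : ℝ)⟫
        - ⟪F' (EuclideanSpace.single J (1 : ℝ)), EuclideanSpace.single I (1 : ℝ)⟫ := by
    intro I J
    rw [hmat, pd, pd, hproj I, hproj J, hsingle, hsingle]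
    rfl
  have hrs : r = s := by
    by_contra hne
    have ht : r⁻¹ - s⁻¹ ≠ 0 := by
      refine sub_ne_zero_of_ne fun hinv => hne (inv_injective hinv)
    have hK : ∀ h y : EuclideanSpace ℝ (Fin m),
        (r⁻¹ - s⁻¹) * (⟪F' h, y⟫ - ⟪F' y, h⟫)
          = ((r ^ 3)⁻¹ * r * s⁻¹ * ⟪a, Gu h + F' h⟫ - (s ^ 3)⁻¹ * ⟪b, Gv h + F' h⟫) * ⟪b, y⟫
            - ((r ^ 3)⁻¹ * r * s⁻¹ * ⟪a, Gu y + F' y⟫ - (s ^ 3)⁻¹ * ⟪b, Gv y + F' y⟫) * ⟪b, h⟫ := by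
      intro h y
      have H1 := hEs h y
      have H2 := hEs y h
      linear_combination H1 - H2 + (r ^ 3)⁻¹ * ⟪a, Gu h + F' h⟫ * (hinner y)
        - (r ^ 3)⁻¹ * ⟪a, Gu y + F' y⟫ * (hinner h)
        - r⁻¹ * (hgu_symm h y) + s⁻¹ * (hgv_symm h y)
    set w : Fin m → ℝ := fun I => (r⁻¹ - s⁻¹)⁻¹ *
      ((r ^ 3)⁻¹ * r * s⁻¹ * ⟪a, Gu (EuclideanSpace.single I (1 : ℝ)) + F' (EuclideanSpace.single I (1 : ℝ))⟫
        - (s ^ 3)⁻¹ * ⟪b, Gv (EuclideanSpace.single I (1 : ℝ)) + F' (EuclideanSpace.single I (1 : ℝ))⟫) with hw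
    set nv : Fin m → ℝ := fun I => ⟪b, EuclideanSpace.single I (1 : ℝ)⟫ with hnv
    have hMeq : (Matrix.of fun I J => hmat F p I J)
        = (Matrix.of fun I J => w I * nv J - nv I * w J : Matrix (Fin m) (Fin m) ℝ) := by
      ext I J
      simp only [Matrix.of_apply]
      rw [hmat_eq I J]
      have h2 := hK (EuclideanSpace.single I (1 : ℝ)) (EuclideanSpace.single J (1 : ℝ))
      have h3 : w I * nv J - nv I * w J
          = (r⁻¹ - s⁻¹)⁻¹ * ((r⁻¹ - s⁻¹) *
            (⟪F' (EuclideanSpace.single I (1 : ℝ)), EuclideanSpace.single J (1 : ℝ)⟫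
              - ⟪F' (EuclideanSpace.single J (1 : ℝ)), EuclideanSpace.single I (1 : ℝ)⟫)) := by
        rw [h2, hw, hnv]
        ring
      rw [h3, inv_mul_cancel_left₀ ht]
    have hle : (Matrix.of fun I J => hmat F p I J).rank ≤ 2 := by
      rw [hMeq]; exact rank_skew_outer w nv
    omega
  have hab2 : a = b := by
    rw [hrs] at hN
    exact smul_right_injective _ (inv_ne_zero hs0) hN
  have h2 : gradient u p + F p = gradient v p + F p := by rw [← ha, ← hb]; exact hab2
  exact add_right_cancel h2
end

section
/- Let Ω ⊆ ℝ^m be an open set, let u, v ∈ C²(Ω) be real-valued and let F ∈ C¹(Ω, ℝ^m). Suppose N_F(u) = N_F(v) at every point of Ω \ (S_F(u) ∪ S_F(v)). Suppose moreover that at each point p of Ω \ (S_F(u) ∪ S_F(v)), either Θ_u is nonintegrable at p or Θ_v is nonintegrable at p; here Θ_w is nonintegrable at p means that there exist indices I, J, K ∈ {1,…,m} such that (∂_K w + F_K) h_{IJ} + (∂_I w + F_I) h_{JK} + (∂_J w + F_J) h_{KI} ≠ 0 at p (equivalently Θ_w ∧ dΘ_w ≠ 0 at p). Then ∇u = ∇v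 at every point of Ω \ (S_F(u) ∪ S_F(v)). -/
/-- `Θ_w` is nonintegrable at `p`: some component of `Θ_w ∧ dΘ_w` is nonzero at `p`. -/
noncomputable def NonIntegrableAt {m : ℕ} (w : EuclideanSpace ℝ (Fin m) → ℝ)
    (F : EuclideanSpace ℝ (Fin m) → EuclideanSpace ℝ (Fin m))
    (p : EuclideanSpace ℝ (Fin m)) : Prop :=
  ∃ I J K : Fin m,
    (pd w p K + F p K) * hmat F p I J + (pd w p I + F p I) * hmat F p J K
      + (pd w p J + F p J) * hmat F p K I ≠ 0

lemma pd_eq_grad {m : ℕ} (f : EuclideanSpace ℝ (Fin m) → ℝ)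
    (p : EuclideanSpace ℝ (Fin m)) (I : Fin m) : pd f p I = gradient f p I := by
  have : fderiv ℝ f p (EuclideanSpace.single I 1)
      = @inner ℝ _ _ (gradient f p) (EuclideanSpace.single I (1:ℝ)) := by
    rw [gradient, InnerProductSpace.toDual_symm_apply]
  rw [pd, this, EuclideanSpace.inner_single_right]
  simp

lemma key {m : ℕ} (Ω : Set (EuclideanSpace ℝ (Fin m))) (hΩ : IsOpen Ω)
    (u v : EuclideanSpace ℝ (Fin m) → ℝ)
    (F : EuclideanSpace ℝ (Fin m) → EuclideanSpace ℝ (Fin m))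
    (hu : ContDiffOn ℝ 2 u Ω) (hv : ContDiffOn ℝ 2 v Ω) (hF : ContDiffOn ℝ 1 F Ω)
    (hN : ∀ p ∈ Ω, gradient u p + F p ≠ 0 → gradient v p + F p ≠ 0 →
      ‖gradient u p + F p‖⁻¹ • (gradient u p + F p)
        = ‖gradient v p + F p‖⁻¹ • (gradient v p + F p))
    (p : EuclideanSpace ℝ (Fin m)) (hp : p ∈ Ω)
    (hA : gradient u p + F p ≠ 0) (hB : gradient v p + F p ≠ 0)
    (hni : NonIntegrableAt v F p) : gradient u p = gradient v p := by
  classical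
  set μ : EuclideanSpace ℝ (Fin m) → ℝ := fun x => ‖gradient u x + F x‖ * ‖gradient v x + F x‖⁻¹ - 1 with hμdef
  -- vector identity on the nonsingular set
  have hvec : ∀ x ∈ Ω, gradient u x + F x ≠ 0 → gradient v x + F x ≠ 0 →
      gradient u x - gradient v x = μ x • (gradient v x + F x) := by
    intro x hx hax hbx
    have h := hN x hx hax hbx
    have hna : ‖gradient u x + F x‖ ≠ 0 := norm_ne_zero_iff.2 hax
    have h2 : gradient u x + F x
        = (‖gradient u x + F x‖ * ‖gradient v x + F x‖⁻¹) • (gradient v x + F x) := by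
      rw [← smul_smul, ← h, smul_inv_smul₀ hna]
    have : gradient u x + F x - (gradient v x + F x) = μ x • (gradient v x + F x) := by
      rw [h2, hμdef, sub_smul, one_smul]
    simpa [add_sub_add_right_eq_sub] using this
  -- differentiability facts at p
  have hup : ContDiffAt ℝ 2 u p := hu.contDiffAt (hΩ.mem_nhds hp)
  have hvp : ContDiffAt ℝ 2 v p := hv.contDiffAt (hΩ.mem_nhds hp)
  have hFp : ContDiffAt ℝ 1 F p := hF.contDiffAt (hΩ.mem_nhds hp)
  have hFd : DifferentiableAt ℝ F p := hFp.differentiableAt one_ne_zero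
  have hDu : DifferentiableAt ℝ (fderiv ℝ u) p :=
    (hup.fderiv_right (by norm_num)).differentiableAt one_ne_zero
  have hDv : DifferentiableAt ℝ (fderiv ℝ v) p :=
    (hvp.fderiv_right (by norm_num)).differentiableAt one_ne_zero
  have hgu : DifferentiableAt ℝ (fun x => gradient u x) p :=
    ((InnerProductSpace.toDual ℝ _).symm.differentiable.differentiableAt).comp p hDu
  have hgv : DifferentiableAt ℝ (fun x => gradient v x) p :=
    ((InnerProductSpace.toDual ℝ _).symm.differentiable.differentiableAt).comp p hDv
  have hAd : DifferentiableAt ℝ (fun x => gradient u x + F x) p := hgu.add hFd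
  have hBd : DifferentiableAt ℝ (fun x => gradient v x + F x) p := hgv.add hFd
  have hnB : ‖gradient v p + F p‖ ≠ 0 := norm_ne_zero_iff.2 hB
  have hμd : DifferentiableAt ℝ μ p :=
    ((hAd.norm ℝ hA).mul ((hBd.norm ℝ hB).inv hnB)).sub_const 1
  -- eventual nonsingularity
  have hev : ∀ᶠ x in nhds p,
      x ∈ Ω ∧ gradient u x + F x ≠ 0 ∧ gradient v x + F x ≠ 0 := by
    filter_upwards [hΩ.mem_nhds hp, hAd.continuousAt.eventually_ne hA,
      hBd.continuousAt.eventually_ne hB] with x h1 h2 h3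
    exact ⟨h1, h2, h3⟩
  -- componentwise eventual equation
  have hevJ : ∀ J : Fin m, (fun x => fderiv ℝ u x (EuclideanSpace.single J 1)
        - fderiv ℝ v x (EuclideanSpace.single J 1))
      =ᶠ[nhds p] fun x => μ x * (fderiv ℝ v x (EuclideanSpace.single J 1) + F x J) := by
    intro J
    filter_upwards [hev] with x hx
    obtain ⟨hx, hax, hbx⟩ := hx
    have h := congrArg (fun z : EuclideanSpace ℝ (Fin m) => z J) (hvec x hx hax hbx)
    simp only [PiLp.sub_apply, PiLp.smul_apply, PiLp.add_apply, smul_eq_mul] at h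
    have eu := pd_eq_grad u x J
    have ev' := pd_eq_grad v x J
    simp only [pd] at eu ev'
    rw [eu, ev', h]
  -- differentiability of component functions
  have hDuJ : ∀ J : Fin m,
      DifferentiableAt ℝ (fun x => fderiv ℝ u x (EuclideanSpace.single J 1)) p :=
    fun J => hDu.clm_apply (differentiableAt_const (EuclideanSpace.single J 1))
  have hDvJ : ∀ J : Fin m,
      DifferentiableAt ℝ (fun x => fderiv ℝ v x (EuclideanSpace.single J 1)) p :=
    fun J => hDv.clm_apply (differentiableAt_const (EuclideanSpace.single J 1))
  have hDFJ : ∀ J : Fin m, DifferentiableAt ℝ (fun x => F x J) p := by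
    intro J
    have := (EuclideanSpace.proj (𝕜 := ℝ) J).differentiableAt.comp p hFd
    exact this
  have hfdu : ∀ J : Fin m, fderiv ℝ (fun x => fderiv ℝ u x (EuclideanSpace.single J 1)) p
      = (fderiv ℝ (fderiv ℝ u) p).flip (EuclideanSpace.single J 1) := by
    intro J
    rw [fderiv_clm_apply hDu (differentiableAt_const (EuclideanSpace.single J 1))]
    simp
  have hfdv : ∀ J : Fin m, fderiv ℝ (fun x => fderiv ℝ v x (EuclideanSpace.single J 1)) p
      = (fderiv ℝ (fderiv ℝ v) p).flip (EuclideanSpace.single J 1) := by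
    intro J
    rw [fderiv_clm_apply hDv (differentiableAt_const (EuclideanSpace.single J 1))]
    simp
  -- the main pointwise differentiated identity
  have main : ∀ I J : Fin m,
      fderiv ℝ (fderiv ℝ u) p (EuclideanSpace.single I 1) (EuclideanSpace.single J 1)
        - fderiv ℝ (fderiv ℝ v) p (EuclideanSpace.single I 1) (EuclideanSpace.single J 1)
      = μ p * (fderiv ℝ (fderiv ℝ v) p (EuclideanSpace.single I 1) (EuclideanSpace.single J 1)
            + pd (fun x => F x J) p I)
        + (fderiv ℝ v p (EuclideanSpace.single J 1) + F p J)
            * fderiv ℝ μ p (EuclideanSpace.single I 1) := by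
    intro I J
    have h1 := (hevJ J).fderiv_eq (𝕜 := ℝ)
    rw [fderiv_fun_sub (hDuJ J) (hDvJ J), fderiv_fun_mul hμd ((hDvJ J).fun_add (hDFJ J)),
      fderiv_fun_add (hDvJ J) (hDFJ J), hfdu J, hfdv J] at h1
    have h2 := congrArg (fun L : EuclideanSpace ℝ (Fin m) →L[ℝ] ℝ =>
      L (EuclideanSpace.single I 1)) h1
    simp only [ContinuousLinearMap.sub_apply, ContinuousLinearMap.add_apply,
      ContinuousLinearMap.smul_apply, ContinuousLinearMap.flip_apply, smul_eq_mul] at h2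
    rw [pd]
    linarith [h2]
  -- symmetry of second derivatives
  have hsymu := hup.isSymmSndFDerivAt (by simp)
  have hsymv := hvp.isSymmSndFDerivAt (by simp)
  -- the antisymmetrized identity
  have E : ∀ I J : Fin m, μ p * hmat F p I J
      = (fderiv ℝ v p (EuclideanSpace.single I 1) + F p I)
          * fderiv ℝ μ p (EuclideanSpace.single J 1)
        - (fderiv ℝ v p (EuclideanSpace.single J 1) + F p J)
          * fderiv ℝ μ p (EuclideanSpace.single I 1) := by
    intro I J
    have h1 := main I J
    have h2 := main J I
    have su := hsymu.eq (EuclideanSpace.single I 1) (EuclideanSpace.single J 1)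
    have sv := hsymv.eq (EuclideanSpace.single I 1) (EuclideanSpace.single J 1)
    unfold hmat
    linear_combination h2 - h1 + su - (1 + μ p) * sv
  -- use nonintegrability
  obtain ⟨I, J, K, hT⟩ := hni
  have hμ0 : μ p = 0 := by
    by_contra hne
    apply hT
    have EIJ := E I J
    have EJK := E J K
    have EKI := E K I
    have hmul : μ p * ((pd v p K + F p K) * hmat F p I J
        + (pd v p I + F p I) * hmat F p J K
        + (pd v p J + F p J) * hmat F p K I) = 0 := by
      simp only [pd]
      linear_combination (fderiv ℝ v p (EuclideanSpace.single K 1) + F p K) * EIJ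
        + (fderiv ℝ v p (EuclideanSpace.single I 1) + F p I) * EJK
        + (fderiv ℝ v p (EuclideanSpace.single J 1) + F p J) * EKI
    rcases mul_eq_zero.1 hmul with h | h
    · exact absurd h hne
    · exact h
  have hfin := hvec p hp hA hB
  rw [hμ0, zero_smul] at hfin
  exact sub_eq_zero.1 hfin

/-- Theorem B: if `N_F(u) = N_F(v)` on the nonsingular set and at each nonsingular point
either `Θ_u` or `Θ_v` is nonintegrable, then `∇u = ∇v` on the nonsingular set. -/
theorem stmt_1 {m : ℕ} (Ω : Set (EuclideanSpace ℝ (Fin m))) (hΩ : IsOpen Ω)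
    (u v : EuclideanSpace ℝ (Fin m) → ℝ)
    (F : EuclideanSpace ℝ (Fin m) → EuclideanSpace ℝ (Fin m))
    (hu : ContDiffOn ℝ 2 u Ω) (hv : ContDiffOn ℝ 2 v Ω) (hF : ContDiffOn ℝ 1 F Ω)
    (hN : ∀ p ∈ Ω, gradient u p + F p ≠ 0 → gradient v p + F p ≠ 0 →
      ‖gradient u p + F p‖⁻¹ • (gradient u p + F p)
        = ‖gradient v p + F p‖⁻¹ • (gradient v p + F p))
    (hnonint : ∀ p ∈ Ω, gradient u p + F p ≠ 0 → gradient v p + F p ≠ 0 →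
      NonIntegrableAt u F p ∨ NonIntegrableAt v F p) :
    ∀ p ∈ Ω, gradient u p + F p ≠ 0 → gradient v p + F p ≠ 0 →
      gradient u p = gradient v p := by
  intro p hp hA hB
  rcases hnonint p hp hA hB with h | h
  · exact (key Ω hΩ v u F hv hu hF
      (fun q hq h1 h2 => (hN q hq h2 h1).symm) p hp hB hA h).symm
  · exact key Ω hΩ u v F hu hv hF hN p hp hA hB h
end

section
/- Let B be an open ball in ℝ^m, m ≥ 2. Let D : B → ℝ, ν = (ν_1, …, ν_m) : B → ℝ^m and F = (F_1, …, F_m) : B → ℝ^m be C^∞ smooth, with D > 0 on B and |ν(x)| = 1 (Euclidean norm) for every x ∈ B. Suppose that on all of B (summation over the repeated index K): (i) for all I, J: (∂_I ν_J − ν_I ν_K ∂_K ν_J) − (∂_J ν_I − ν_J ν_K ∂_K ν_I) = (1/D)(h_{IJ} − ν_J ν_K h_{IK} − ν_I ν_K h_{KJ}); and (ii) for all K: ∂_K D − ν_K ν_J ∂_J D = ν_J (∂_J ν_K) D − ν_J h_{JK}. Then there exists a C^∞ smooth function u : B → ℝ such that ∂_I u = D ν_I − F_I on B for every I, i.e.,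 ν = (∇u + F)/D. -/
open RealInnerProductSpace Metric MeasureTheory
noncomputable def innerR {E : Type*} [NormedAddCommGroup E] [InnerProductSpace ℝ E] :
    E →L[ℝ] E →L[ℝ] ℝ :=
  LinearMap.mkContinuous
    { toFun := fun v => innerSL ℝ v
      map_add' := fun v w => by ext u; simp [inner_add_left]
      map_smul' := fun r v => by ext u; simp [real_inner_smul_left] }
    1 (fun v => by simp [innerSL_apply_norm])

@[simp] lemma innerR_apply {E : Type*} [NormedAddCommGroup E] [InnerProductSpace ℝ E]
    (v w : E) : innerR v w = ⟪v, w⟫ := rfl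

lemma innerR_norm_le {E : Type*} [NormedAddCommGroup E] [InnerProductSpace ℝ E]
    (v : E) : ‖innerR v‖ ≤ ‖v‖ := by
  have : innerR v = innerSL ℝ v := rfl
  rw [this, innerSL_apply_norm]

variable {E : Type*} [NormedAddCommGroup E] [InnerProductSpace ℝ E] [FiniteDimensional ℝ E]

theorem poincare (c : E) (r : ℝ) (g : E → E) (hg : ContDiffOn ℝ (⊤ : ℕ∞) g (ball c r))
    (hsymm : ∀ x ∈ ball c r, ∀ v w, ⟪fderiv ℝ g x v, w⟫ = ⟪fderiv ℝ g x w, v⟫) :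
    ∃ u : E → ℝ, ContDiffOn ℝ (⊤ : ℕ∞) u (ball c r) ∧
      ∀ x ∈ ball c r, HasFDerivAt u (innerR (g x)) x := by
  set B := ball c r with hB
  have hgc : ContinuousOn g B := hg.continuousOn
  have hg' : ContinuousOn (fun y => fderiv ℝ g y) B :=
    hg.continuousOn_fderiv_of_isOpen isOpen_ball (by exact_mod_cast le_top)
  have hgd : ∀ y ∈ B, HasFDerivAt g (fderiv ℝ g y) y := fun y hy =>
    ((hg.contDiffAt (isOpen_ball.mem_nhds hy)).differentiableAt (by simp)).hasFDerivAt
  set u : E → ℝ := fun x => ∫ t in (0:ℝ)..1, ⟪g (c + t • (x - c)), x - c⟫ with hu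
  -- membership of segment points
  have hmem : ∀ x : E, ∀ s : ℝ, dist x c < s → ∀ t ∈ Set.Icc (0:ℝ) 1,
      c + t • (x - c) ∈ ball c s := by
    intro x s hx t ht
    rw [mem_ball, dist_eq_norm, add_sub_cancel_left, norm_smul, Real.norm_eq_abs,
      abs_of_nonneg ht.1]
    calc t * ‖x - c‖ ≤ 1 * ‖x - c‖ := by
          have := norm_nonneg (x - c); nlinarith [ht.2]
      _ = dist x c := by rw [one_mul, dist_eq_norm]
      _ < s := hx
  have key : ∀ x₀ ∈ B, HasFDerivAt u (innerR (g x₀)) x₀ := by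
    intro x₀ hx₀
    set ε : ℝ := (r - dist x₀ c) / 2 with hε
    have hx₀r : dist x₀ c < r := mem_ball.1 hx₀
    have εpos : 0 < ε := by simp [hε]; linarith
    have hclose : ∀ x ∈ closedBall x₀ ε, dist x c < r := by
      intro x hx
      calc dist x c ≤ dist x x₀ + dist x₀ c := dist_triangle _ _ _
        _ ≤ ε + dist x₀ c := by have := mem_closedBall.1 hx; linarith
        _ < r := by rw [hε]; linarith
    have hseg : ∀ x ∈ closedBall x₀ ε, ∀ t ∈ Set.Icc (0:ℝ) 1, c + t • (x - c) ∈ B :=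
      fun x hx t ht => hmem x r (hclose x hx) t ht
    have hballsub : ball x₀ ε ⊆ B := fun x hx => mem_ball.2 (hclose x (ball_subset_closedBall hx))
    -- F and F'
    set F : E → ℝ → ℝ := fun x t => ⟪g (c + t • (x - c)), x - c⟫ with hF
    set F' : E → ℝ → E →L[ℝ] ℝ := fun x t =>
      t • ((innerR (x - c)).comp (fderiv ℝ g (c + t • (x - c)))) +
        innerR (g (c + t • (x - c))) with hF'
    have hpathc : ∀ x : E, Continuous (fun t : ℝ => c + t • (x - c)) := by
      intro x; fun_prop
    have hFcont : ∀ x, dist x c < r → ContinuousOn (F x) (Set.uIcc (0:ℝ) 1) := by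
      intro x hx
      rw [Set.uIcc_of_le (zero_le_one : (0:ℝ) ≤ 1)]
      exact ContinuousOn.inner
        (hgc.comp (hpathc x).continuousOn (fun t ht => hmem x r hx t ht)) continuousOn_const
    have hF'cont : ∀ x, dist x c < r → ContinuousOn (F' x) (Set.uIcc (0:ℝ) 1) := by
      intro x hx
      rw [Set.uIcc_of_le (zero_le_one : (0:ℝ) ≤ 1)]
      have hmaps : Set.MapsTo (fun t : ℝ => c + t • (x - c)) (Set.Icc 0 1) B :=
        fun t ht => hmem x r hx t ht
      have h1 : ContinuousOn (fun t : ℝ => fderiv ℝ g (c + t • (x - c))) (Set.Icc 0 1) :=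
        hg'.comp (hpathc x).continuousOn hmaps
      have h2 : ContinuousOn
          (fun t : ℝ => (innerR (x - c)).comp (fderiv ℝ g (c + t • (x - c)))) (Set.Icc 0 1) :=
        ((ContinuousLinearMap.compL ℝ E E ℝ (innerR (x - c))).continuous).comp_continuousOn h1
      have h3 : ContinuousOn (fun t : ℝ => innerR (g (c + t • (x - c)))) (Set.Icc 0 1) :=
        innerR.continuous.comp_continuousOn (hgc.comp (hpathc x).continuousOn hmaps)
      exact (continuousOn_id.smul h2).add h3
    -- compact bound
    set K : Set E := (fun p : ℝ × E => c + p.1 • (p.2 - c)) '' (Set.Icc 0 1 ×ˢ closedBall x₀ ε)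
      with hK
    have hKcompact : IsCompact K :=
      ((isCompact_Icc).prod (isCompact_closedBall x₀ ε)).image (by fun_prop)
    have hKB : K ⊆ B := by
      rintro y ⟨⟨t, x⟩, ⟨ht, hx⟩, rfl⟩
      exact hseg x hx t ht
    obtain ⟨C1, hC1⟩ := hKcompact.exists_bound_of_continuousOn (hg'.mono hKB)
    obtain ⟨C2, hC2⟩ := hKcompact.exists_bound_of_continuousOn (hgc.mono hKB)
    have hmemK : ∀ x ∈ ball x₀ ε, ∀ t ∈ Set.Icc (0:ℝ) 1, c + t • (x - c) ∈ K := by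
      intro x hx t ht
      exact ⟨(t, x), ⟨ht, ball_subset_closedBall hx⟩, rfl⟩
    set Cb : ℝ := (ε + dist x₀ c) * C1 + C2 with hCb
    have h_bound : ∀ t ∈ Set.uIoc (0:ℝ) 1, ∀ x ∈ ball x₀ ε, ‖F' x t‖ ≤ Cb := by
      intro t ht x hx
      rw [Set.uIoc_of_le (zero_le_one : (0:ℝ) ≤ 1)] at ht
      have ht' : t ∈ Set.Icc (0:ℝ) 1 := ⟨le_of_lt ht.1, ht.2⟩
      have hpK : c + t • (x - c) ∈ K := hmemK x hx t ht'
      have hb1 : ‖fderiv ℝ g (c + t • (x - c))‖ ≤ C1 := hC1 _ hpK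
      have hb2 : ‖g (c + t • (x - c))‖ ≤ C2 := hC2 _ hpK
      have hxc : ‖x - c‖ ≤ ε + dist x₀ c := by
        rw [← dist_eq_norm]
        calc dist x c ≤ dist x x₀ + dist x₀ c := dist_triangle _ _ _
          _ ≤ ε + dist x₀ c := by
              have := le_of_lt (mem_ball.1 hx); linarith
      calc ‖F' x t‖ ≤ ‖t • ((innerR (x - c)).comp (fderiv ℝ g (c + t • (x - c))))‖ +
            ‖innerR (g (c + t • (x - c)))‖ := norm_add_le _ _
        _ ≤ |t| * (‖innerR (x - c)‖ * ‖fderiv ℝ g (c + t • (x - c))‖) + ‖g (c + t • (x - c))‖ := by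
            refine add_le_add ?_ (innerR_norm_le _)
            calc ‖t • ((innerR (x - c)).comp (fderiv ℝ g (c + t • (x - c))))‖
                ≤ |t| * ‖(innerR (x - c)).comp (fderiv ℝ g (c + t • (x - c)))‖ := by
                  simpa [Real.norm_eq_abs] using
                    norm_smul_le t ((innerR (x - c)).comp (fderiv ℝ g (c + t • (x - c))))
              _ ≤ |t| * (‖innerR (x - c)‖ * ‖fderiv ℝ g (c + t • (x - c))‖) :=
                  mul_le_mul_of_nonneg_left (ContinuousLinearMap.opNorm_comp_le _ _) (abs_nonneg t)
        _ ≤ 1 * ((ε + dist x₀ c) * C1) + C2 := by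
            have h0 : (0:ℝ) ≤ ε + dist x₀ c := by positivity
            have habs : |t| ≤ 1 := by rw [abs_of_nonneg ht'.1]; exact ht'.2
            have : ‖innerR (x - c)‖ * ‖fderiv ℝ g (c + t • (x - c))‖ ≤ (ε + dist x₀ c) * C1 :=
              mul_le_mul ((innerR_norm_le _).trans hxc) hb1 (norm_nonneg _) h0
            exact add_le_add (mul_le_mul habs this (by positivity) zero_le_one) hb2
        _ = Cb := by rw [hCb]; ring
    -- differentiability in x
    have h_diff : ∀ t ∈ Set.uIoc (0:ℝ) 1, ∀ x ∈ ball x₀ ε,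
        HasFDerivAt (fun y => F y t) (F' x t) x := by
      intro t ht x hx
      rw [Set.uIoc_of_le (zero_le_one : (0:ℝ) ≤ 1)] at ht
      have ht' : t ∈ Set.Icc (0:ℝ) 1 := ⟨le_of_lt ht.1, ht.2⟩
      have hp : c + t • (x - c) ∈ B := hseg x (ball_subset_closedBall hx) t ht'
      have hpath : HasFDerivAt (fun y : E => c + t • (y - c))
          (t • ContinuousLinearMap.id ℝ E) x :=
        (((hasFDerivAt_id x).sub_const c).const_smul t).const_add c
      have hgp : HasFDerivAt g (fderiv ℝ g (c + t • (x - c))) (c + t • (x - c)) := hgd _ hp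
      have hcomp : HasFDerivAt (fun y : E => g (c + t • (y - c)))
          ((fderiv ℝ g (c + t • (x - c))).comp (t • ContinuousLinearMap.id ℝ E)) x :=
        hgp.comp x hpath
      have hsubc : HasFDerivAt (fun y : E => y - c) (ContinuousLinearMap.id ℝ E) x :=
        (hasFDerivAt_id x).sub_const c
      have hFd := hcomp.inner ℝ hsubc
      refine hFd.congr_fderiv ?_
      ext v
      simp only [hF', ContinuousLinearMap.add_apply, ContinuousLinearMap.smul_apply,
        ContinuousLinearMap.comp_apply, ContinuousLinearMap.coe_id', id_eq,
        fderivInnerCLM_apply, ContinuousLinearMap.prod_apply, innerR_apply, smul_eq_mul,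
        ContinuousLinearMap.map_smul, real_inner_smul_left]
      rw [real_inner_comm (x - c) ((fderiv ℝ g (c + t • (x - c))) v)]
      ring
    -- apply parametric differentiation
    have hF_meas : ∀ᶠ x in nhds x₀, AEStronglyMeasurable (F x) (volume.restrict (Set.uIoc 0 1)) := by
      filter_upwards [isOpen_ball.mem_nhds (mem_ball_self εpos)] with x hx
      exact ((hFcont x (hclose x (ball_subset_closedBall hx))).mono
        (Set.uIoc_subset_uIcc)).aestronglyMeasurable measurableSet_uIoc
    have hF_int : IntervalIntegrable (F x₀) volume 0 1 :=
      (hFcont x₀ hx₀r).intervalIntegrable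
    have hF'_meas : AEStronglyMeasurable (F' x₀) (volume.restrict (Set.uIoc 0 1)) :=
      ((hF'cont x₀ hx₀r).mono Set.uIoc_subset_uIcc).aestronglyMeasurable measurableSet_uIoc
    have hfd := intervalIntegral.hasFDerivAt_integral_of_dominated_of_fderiv_le
      (μ := volume) (F := F) (F' := F') (a := 0) (b := 1) (bound := fun _ => Cb) (ball_mem_nhds x₀ εpos)
      hF_meas hF_int hF'_meas (Filter.Eventually.of_forall fun t ht => h_bound t ht)
      intervalIntegrable_const (Filter.Eventually.of_forall fun t ht => h_diff t ht)
    -- FTC computation of the derivative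
    have hΦ : ∀ t ∈ Set.uIcc (0:ℝ) 1,
        HasDerivAt (fun s : ℝ => s • innerR (g (c + s • (x₀ - c)))) (F' x₀ t) t := by
      intro t ht
      rw [Set.uIcc_of_le (zero_le_one : (0:ℝ) ≤ 1)] at ht
      have hp : c + t • (x₀ - c) ∈ B := hseg x₀ (mem_closedBall_self εpos.le) t ht
      have hq : HasDerivAt (fun s : ℝ => c + s • (x₀ - c)) (x₀ - c) t := by
        simpa using ((hasDerivAt_id t).smul_const (x₀ - c)).const_add c
      have hgq : HasDerivAt (fun s : ℝ => g (c + s • (x₀ - c)))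
          (fderiv ℝ g (c + t • (x₀ - c)) (x₀ - c)) t :=
        (hgd _ hp).comp_hasDerivAt t hq
      have hinner : HasDerivAt (fun s : ℝ => innerR (g (c + s • (x₀ - c))))
          (innerR (fderiv ℝ g (c + t • (x₀ - c)) (x₀ - c))) t :=
        innerR.hasFDerivAt.comp_hasDerivAt t hgq
      have := (hasDerivAt_id t).smul hinner
      refine this.congr_deriv ?_
      rw [hF']
      rw [one_smul, id_eq]
      congr 1
      congr 1
      ext v
      simp only [innerR_apply, ContinuousLinearMap.comp_apply]
      have hcm := real_inner_comm v ((fderiv ℝ g (c + t • (x₀ - c))) (x₀ - c))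
      have hcm2 := real_inner_comm ((fderiv ℝ g (c + t • (x₀ - c))) v) (x₀ - c)
      linarith [hcm, hcm2, hsymm _ hp (x₀ - c) v]
    have hint' : IntervalIntegrable (F' x₀) volume 0 1 := (hF'cont x₀ hx₀r).intervalIntegrable
    have hFTC := intervalIntegral.integral_eq_sub_of_hasDerivAt hΦ hint'
    have hval : (∫ t in (0:ℝ)..1, F' x₀ t) = innerR (g x₀) := by
      rw [hFTC]; simp
    rw [hval] at hfd
    exact hfd
  refine ⟨u, ?_, key⟩
  rw [contDiffOn_infty_iff_fderiv_of_isOpen isOpen_ball]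
  refine ⟨fun x hx => (key x hx).differentiableAt.differentiableWithinAt, ?_⟩
  exact (innerR.contDiff.comp_contDiffOn hg).congr fun x hx => (key x hx).fderiv

/-- Theorem E (integrability): given smooth `D > 0`, a smooth unit vector field `ν` and a
smooth vector field `F` on an open ball `B ⊆ ℝ^m` (`m ≥ 2`) satisfying the two integrability
conditions (1.1.4) and (1.1.6), there is a smooth `u` on `B` with `∂_I u = D ν_I − F_I`,
i.e. `ν = (∇u + F)/D`. -/
theorem stmt_2 {m : ℕ} (hm : 2 ≤ m) (c : EuclideanSpace ℝ (Fin m)) (r : ℝ) (hr : 0 < r)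
    (D : EuclideanSpace ℝ (Fin m) → ℝ)
    (ν F : EuclideanSpace ℝ (Fin m) → EuclideanSpace ℝ (Fin m))
    (hD : ContDiffOn ℝ (⊤ : ℕ∞) D (Metric.ball c r))
    (hν : ContDiffOn ℝ (⊤ : ℕ∞) ν (Metric.ball c r))
    (hF : ContDiffOn ℝ (⊤ : ℕ∞) F (Metric.ball c r))
    (hDpos : ∀ x ∈ Metric.ball c r, 0 < D x)
    (hunit : ∀ x ∈ Metric.ball c r, ‖ν x‖ = 1)
    (h1 : ∀ x ∈ Metric.ball c r, ∀ I J : Fin m,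
      (pd (fun y => ν y J) x I - ν x I * ∑ K, ν x K * pd (fun y => ν y J) x K)
        - (pd (fun y => ν y I) x J - ν x J * ∑ K, ν x K * pd (fun y => ν y I) x K)
      = (1 / D x) * (hmat F x I J - ν x J * ∑ K, ν x K * hmat F x I K
          - ν x I * ∑ K, ν x K * hmat F x K J))
    (h2 : ∀ x ∈ Metric.ball c r, ∀ K : Fin m,
      pd D x K - ν x K * ∑ J, ν x J * pd D x J
      = (∑ J, ν x J * pd (fun y => ν y K) x J) * D x - ∑ J, ν x J * hmat F x J K) :
    ∃ u : EuclideanSpace ℝ (Fin m) → ℝ, ContDiffOn ℝ (⊤ : ℕ∞) u (Metric.ball c r) ∧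
      ∀ x ∈ Metric.ball c r, ∀ I : Fin m, pd u x I = D x * ν x I - F x I := by
  classical
  set B := Metric.ball c r with hBdef
  set g : EuclideanSpace ℝ (Fin m) → EuclideanSpace ℝ (Fin m) :=
    fun x => D x • ν x - F x with hgdef
  have hg : ContDiffOn ℝ (⊤ : ℕ∞) g B := (hD.smul hν).sub hF
  -- differentiability facts at points of B
  have hDat : ∀ x ∈ B, DifferentiableAt ℝ D x := fun x hx =>
    (hD.contDiffAt (isOpen_ball.mem_nhds hx)).differentiableAt (by simp)
  have hνat : ∀ x ∈ B, DifferentiableAt ℝ ν x := fun x hx =>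
    (hν.contDiffAt (isOpen_ball.mem_nhds hx)).differentiableAt (by simp)
  have hFat : ∀ x ∈ B, DifferentiableAt ℝ F x := fun x hx =>
    (hF.contDiffAt (isOpen_ball.mem_nhds hx)).differentiableAt (by simp)
  have hgat : ∀ x ∈ B, DifferentiableAt ℝ g x := fun x hx =>
    ((hDat x hx).smul (hνat x hx)).sub (hFat x hx)
  have hcomp : ∀ (f : EuclideanSpace ℝ (Fin m) → EuclideanSpace ℝ (Fin m))
      (x : EuclideanSpace ℝ (Fin m)), DifferentiableAt ℝ f x →
      ∀ J : Fin m, DifferentiableAt ℝ (fun y => f y J) x := fun f x hf J =>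
    ((EuclideanSpace.proj (𝕜 := ℝ) J).differentiableAt).comp x hf
  -- the product rule for the coordinates of g
  have hpdg : ∀ x ∈ B, ∀ I J : Fin m, pd (fun y => g y J) x I =
      D x * pd (fun y => ν y J) x I + ν x J * pd D x I - pd (fun y => F y J) x I := by
    intro x hx I J
    have hfun : (fun y => g y J) = fun y => D y * ν y J - F y J := by
      funext y; simp [hgdef, PiLp.smul_apply, PiLp.sub_apply]
    rw [hfun]
    unfold pd
    rw [fderiv_fun_sub (f := fun y => D y * ν y J) ((hDat x hx).mul (hcomp ν x (hνat x hx) J)) (hcomp F x (hFat x hx) J),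
      fderiv_fun_mul (hDat x hx) (hcomp ν x (hνat x hx) J)]
    simp only [ContinuousLinearMap.coe_sub', Pi.sub_apply, ContinuousLinearMap.add_apply,
      ContinuousLinearMap.coe_smul', Pi.smul_apply, smul_eq_mul]
  -- the curl of g vanishes on B (the algebraic heart, from h1 and h2)
  have hcurl : ∀ x ∈ B, ∀ I J : Fin m,
      pd (fun y => g y J) x I = pd (fun y => g y I) x J := by
    intro x hx I J
    have hDne : D x ≠ 0 := ne_of_gt (hDpos x hx)
    have hanti : ∀ a b : Fin m, hmat F x a b = -hmat F x b a := by
      intro a b; simp only [hmat]; ring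
    have hconv : (∑ K, ν x K * hmat F x I K) = -∑ K, ν x K * hmat F x K I := by
      rw [← Finset.sum_neg_distrib]
      exact Finset.sum_congr rfl fun K _ => by rw [hanti I K]; ring
    have h1' : ((pd (fun y => ν y J) x I - ν x I * ∑ K, ν x K * pd (fun y => ν y J) x K)
        - (pd (fun y => ν y I) x J - ν x J * ∑ K, ν x K * pd (fun y => ν y I) x K)) * D x
      = hmat F x I J - ν x J * ∑ K, ν x K * hmat F x I K
          - ν x I * ∑ K, ν x K * hmat F x K J := by
      rw [h1 x hx I J]; field_simp
    rw [hconv] at h1'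
    have h2I := h2 x hx I
    have h2J := h2 x hx J
    rw [hpdg x hx I J, hpdg x hx J I]
    simp only [hmat] at h1' h2I h2J
    linear_combination h1' + ν x J * h2I - ν x I * h2J
  -- the full Jacobian of g is symmetric on B
  have hsymm : ∀ x ∈ B, ∀ v w : EuclideanSpace ℝ (Fin m),
      ⟪fderiv ℝ g x v, w⟫ = ⟪fderiv ℝ g x w, v⟫ := by
    intro x hx v w
    set A := fderiv ℝ g x with hA
    have hAentry : ∀ I J : Fin m, pd (fun y => g y J) x I =
        A (EuclideanSpace.single I 1) J := by
      intro I J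
      have h : HasFDerivAt (fun y => g y J)
          ((EuclideanSpace.proj (𝕜 := ℝ) J).comp A) x :=
        (EuclideanSpace.proj (𝕜 := ℝ) J).hasFDerivAt.comp x (hgat x hx).hasFDerivAt
      unfold pd
      rw [h.fderiv]
      simp
    have hM : ∀ I J : Fin m, A (EuclideanSpace.single I 1) J
        = A (EuclideanSpace.single J 1) I := by
      intro I J
      rw [← hAentry I J, ← hAentry J I, hcurl x hx I J]
    have hexpand : ∀ a b : EuclideanSpace ℝ (Fin m),
        ⟪A a, b⟫ = ∑ i, ∑ j, a i * (b j * A (EuclideanSpace.single i 1) j) := by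
      intro a b
      have ha : a = ∑ i, a i • EuclideanSpace.single i 1 := by
        have := (EuclideanSpace.basisFun (Fin m) ℝ).sum_repr a
        simp only [EuclideanSpace.basisFun_apply, EuclideanSpace.basisFun_repr] at this
        exact this.symm
      conv_lhs => rw [ha]
      rw [map_sum, sum_inner]
      refine Finset.sum_congr rfl fun i _ => ?_
      rw [_root_.map_smul, real_inner_smul_left, PiLp.inner_apply]
      simp only [RCLike.inner_apply, conj_trivial, PiLp.smul_apply, smul_eq_mul]
      rw [Finset.mul_sum]
    calc ⟪A v, w⟫ = ∑ i, ∑ j, v i * (w j * A (EuclideanSpace.single i 1) j) := hexpand v w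
      _ = ∑ i, ∑ j, w j * (v i * A (EuclideanSpace.single j 1) i) := by
          refine Finset.sum_congr rfl fun i _ => Finset.sum_congr rfl fun j _ => ?_
          rw [hM i j]; ring
      _ = ∑ j, ∑ i, w j * (v i * A (EuclideanSpace.single j 1) i) := Finset.sum_comm
      _ = ⟪A w, v⟫ := (hexpand w v).symm
  obtain ⟨u, hu, hukey⟩ := poincare c r g hg hsymm
  refine ⟨u, hu, fun x hx I => ?_⟩
  have h := (hukey x hx).fderiv
  unfold pd
  rw [h]
  have : innerR (g x) (EuclideanSpace.single I 1) = ⟪g x, EuclideanSpace.single I 1⟫ := rfl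
  rw [this, EuclideanSpace.inner_single_right]
  simp [hgdef, PiLp.smul_apply, PiLp.sub_apply]
end

section
/- Let h be a skew-symmetric real m×m matrix (m ≥ 2), i.e., h + hᵀ = 0, and let ν be an m×1 real column vector with |ν| = 1. Suppose h − h ν νᵀ − ν νᵀ h = 0. Then the rank of h is 0 or 2. -/
open Matrix

/-- Lemma 2.1: if `h` is a skew-symmetric real `m×m` matrix (`m ≥ 2`) and `ν` a unit column
vector with `h − h ν νᵀ − ν νᵀ h = 0`, then `rank h = 0` or `rank h = 2`. -/
theorem stmt_4 {m : ℕ} (hm : 2 ≤ m) (h : Matrix (Fin m) (Fin m) ℝ)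
    (hskew : h + hᵀ = 0) (ν : Fin m → ℝ) (hunit : ∑ i, ν i ^ 2 = 1)
    (heq : h - h * Matrix.vecMulVec ν ν - Matrix.vecMulVec ν ν * h = 0) :
    h.rank = 0 ∨ h.rank = 2 := by
  have hT : hᵀ = -h := by linear_combination (norm := (ext i j; simp)) hskew
  set a : Fin m → ℝ := h *ᵥ ν with ha
  -- h = vecMulVec a ν - vecMulVec ν a
  have hdecomp : h = vecMulVec a ν - vecMulVec ν a := by
    have h1 : h * Matrix.vecMulVec ν ν = vecMulVec a ν := by
      ext i j
      simp [mul_apply, vecMulVec_apply, ha, mulVec, dotProduct, Finset.sum_mul, mul_assoc]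
    have h2 : Matrix.vecMulVec ν ν * h = - vecMulVec ν a := by
      ext i j
      have : ∀ k, h k j = -(h j k) := fun k => by
        have := congrFun (congrFun hT j) k; simpa using this
      simp only [mul_apply, vecMulVec_apply, Matrix.neg_apply, ha, mulVec, dotProduct]
      rw [Finset.mul_sum, ← Finset.sum_neg_distrib]
      exact Finset.sum_congr rfl fun k _ => by rw [this k]; ring
    have := heq
    rw [h1, h2] at this
    linear_combination (norm := (ext i j; simp)) this
  have hνν : ν ⬝ᵥ ν = 1 := by
    simpa [dotProduct, sq] using hunit
  have haν : a ⬝ᵥ ν = 0 := by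
    have h1 : ν ⬝ᵥ a = (hᵀ *ᵥ ν) ⬝ᵥ ν := by
      rw [ha, Matrix.dotProduct_mulVec, ← Matrix.mulVec_transpose]
    rw [hT] at h1
    have h2 : ν ⬝ᵥ a = -(a ⬝ᵥ ν) := by
      rw [h1, Matrix.neg_mulVec, neg_dotProduct, ← ha]
    have h3 : ν ⬝ᵥ a = a ⬝ᵥ ν := dotProduct_comm _ _
    linarith [h2, h3.symm]
  have hmv : ∀ y : Fin m → ℝ, h *ᵥ y = (ν ⬝ᵥ y) • a - (a ⬝ᵥ y) • ν := by
    intro y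
    rw [hdecomp]
    ext i
    simp only [mulVec, dotProduct, Pi.smul_apply, Pi.sub_apply, smul_eq_mul]
    have hk : ∀ k, (vecMulVec a ν - vecMulVec ν a) i k * y k
        = a i * (ν k * y k) - ν i * (a k * y k) := fun k => by
      simp only [Matrix.sub_apply, vecMulVec_apply]; ring
    rw [Finset.sum_congr rfl (fun k _ => hk k), Finset.sum_sub_distrib,
      ← Finset.mul_sum, ← Finset.mul_sum]
    ring
  rcases eq_or_ne a 0 with ha0 | ha0
  · left
    have hz : h = 0 := by
      ext i j
      have := congrFun (hmv (Pi.single j 1)) i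
      simpa [mulVec_single, ha0] using this
    simp [hz]
  · right
    have hhv : h *ᵥ ν = a := rfl
    have hha : h *ᵥ a = (-(a ⬝ᵥ a)) • ν := by
      rw [hmv a, dotProduct_comm ν a, haν]
      simp [dotProduct_comm]
    have haa : a ⬝ᵥ a ≠ 0 := fun hc => ha0 (dotProduct_self_eq_zero.mp hc)
    have hrange : LinearMap.range h.mulVecLin = Submodule.span ℝ {a, ν} := by
      apply le_antisymm
      · rintro x ⟨y, rfl⟩
        rw [Matrix.mulVecLin_apply, hmv y]
        exact Submodule.sub_mem _
          (Submodule.smul_mem _ _ (Submodule.subset_span (by simp)))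
          (Submodule.smul_mem _ _ (Submodule.subset_span (by simp)))
      · rw [Submodule.span_le]
        rintro x (rfl | rfl)
        · exact ⟨ν, hhv⟩
        · refine ⟨(-(a ⬝ᵥ a))⁻¹ • a, ?_⟩
          rw [Matrix.mulVecLin_apply, Matrix.mulVec_smul, hha, smul_smul,
            inv_mul_cancel₀ (by simpa using haa), one_smul]
    have hli : LinearIndependent ℝ ![a, ν] := by
      rw [LinearIndependent.pair_iff]
      intro s t hst
      have hd1 : (s • a + t • ν) ⬝ᵥ ν = 0 := by rw [hst]; simp
      have hd2 : (s • a + t • ν) ⬝ᵥ a = 0 := by rw [hst]; simp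
      rw [add_dotProduct, smul_dotProduct, smul_dotProduct, haν, hνν] at hd1
      rw [add_dotProduct, smul_dotProduct, smul_dotProduct,
        dotProduct_comm ν a, haν] at hd2
      simp only [smul_eq_mul, mul_zero, mul_one, zero_add, add_zero] at hd1 hd2
      have hs : s = 0 := by
        rcases mul_eq_zero.mp hd2 with h' | h'
        · exact h'
        · exact absurd h' haa
      exact ⟨hs, hd1⟩
    have hspan : ({a, ν} : Set (Fin m → ℝ)) = Set.range ![a, ν] := by
      simp [Set.range_subset_iff]
      ext x
      simp [Matrix.range_cons, Matrix.range_empty]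
      tauto
    rw [Matrix.rank, hrange, hspan, finrank_span_eq_card hli, Fintype.card_fin]
end

section
/- Let h be a skew-symmetric real m×m matrix (m ≥ 2) and let ν ∈ ℝ^m be a unit vector. Then the following are equivalent: (i) for all indices I, J, K ∈ {1,…,m}: ν_K h_{IJ} + ν_I h_{JK} + ν_J h_{KI} = 0; (ii) for all indices I, J ∈ {1,…,m}: h_{IJ} − ν_J Σ_K ν_K h_{IK} − ν_I Σ_K ν_K h_{KJ} = 0. (In the setting of a C² function u and C¹ vector field F with Θ_u := du + Σ F_I dx^I, taking h_{IJ} = ∂_I F_J − ∂_J F_I and ν the horizontal normal at a nonsingular point, condition (i) is the Frobenius integrability condition Θ_u ∧ dΘ_u = 0 at that point.) -/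
open Matrix

/-- For a skew-symmetric real `m×m` matrix `h` (`m ≥ 2`) and a unit vector `ν`, the Frobenius
integrability condition `ν_K h_{IJ} + ν_I h_{JK} + ν_J h_{KI} = 0` (for all `I, J, K`) is
equivalent to `h_{IJ} − ν_J Σ_K ν_K h_{IK} − ν_I Σ_K ν_K h_{KJ} = 0` (for all `I, J`). -/
theorem stmt_5 {m : ℕ} (hm : 2 ≤ m) (h : Matrix (Fin m) (Fin m) ℝ)
    (hskew : ∀ I J, h I J + h J I = 0) (ν : Fin m → ℝ) (hunit : ∑ i, ν i ^ 2 = 1) :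
    (∀ I J K : Fin m, ν K * h I J + ν I * h J K + ν J * h K I = 0)
    ↔ (∀ I J : Fin m, h I J - ν J * ∑ K, ν K * h I K - ν I * ∑ K, ν K * h K J = 0) := by
  have hs : ∀ A B, h A B = -h B A := fun A B => by linarith [hskew A B]
  constructor
  · intro H I J
    have key : (∑ K, ν K ^ 2) * h I J + ν I * ∑ K, ν K * h J K
        + ν J * ∑ K, ν K * h K I = 0 := by
      rw [Finset.sum_mul, Finset.mul_sum, Finset.mul_sum, ← Finset.sum_add_distrib,
        ← Finset.sum_add_distrib]
      refine Finset.sum_eq_zero fun K _ => ?_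
      have := H I J K
      linear_combination ν K * this
    rw [hunit, one_mul] at key
    have s1 : ∑ K, ν K * h J K = -∑ K, ν K * h K J := by
      rw [← Finset.sum_neg_distrib]
      exact Finset.sum_congr rfl fun K _ => by rw [hs J K]; ring
    have s2 : ∑ K, ν K * h K I = -∑ K, ν K * h I K := by
      rw [← Finset.sum_neg_distrib]
      exact Finset.sum_congr rfl fun K _ => by rw [hs K I]; ring
    rw [s1, s2] at key
    linear_combination key
  · intro H I J K
    have e : ∀ A B, h A B = ν B * (∑ L, ν L * h A L) - ν A * (∑ L, ν L * h B L) := by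
      intro A B
      have h1 := H A B
      have s : ∑ L, ν L * h L B = -∑ L, ν L * h B L := by
        rw [← Finset.sum_neg_distrib]
        exact Finset.sum_congr rfl fun L _ => by rw [hs L B]; ring
      rw [s] at h1
      linear_combination h1
    rw [e I J, e J K, e K I]
    ring
end

section
/- Let Ω ⊆ ℝ^m be an open set, u ∈ C²(Ω) real-valued, F ∈ C¹(Ω, ℝ^m), and let p ∈ Ω satisfy ∇u(p) + F(p) ≠ 0. With D_u := |∇u + F|, ν_J := (∂_J u + F_J)/D_u, and δ_I := ∂_I − ν_I ν_K ∂_K (summation over K), the following identity holds at p for all I, J: δ_I ν_J − δ_J ν_I = (1/D_u) ( h_{IJ} − ν_J Σ_K ν_K h_{IK} − ν_I Σ_K ν_K h_{KJ} ). -/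
/-- The `J`-th component `ν_J = (∂_J u + F_J)/|∇u + F|` of the horizontal normal,
as a scalar function. -/
noncomputable def nuc {m : ℕ} (u : EuclideanSpace ℝ (Fin m) → ℝ)
    (F : EuclideanSpace ℝ (Fin m) → EuclideanSpace ℝ (Fin m)) (J : Fin m)
    (x : EuclideanSpace ℝ (Fin m)) : ℝ :=
  (pd u x J + F x J) / ‖gradient u x + F x‖

lemma alg_aux {m : ℕ} (b : Fin m → Fin m → ℝ) (c : Fin m → ℝ) (Dp : ℝ) (hDp : Dp ≠ 0)
    (I J : Fin m) :
    ((b I J / Dp - c J * (∑ K, c K * b I K) / Dp ^ 3)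
        - c I / Dp * ∑ K, c K / Dp * (b K J / Dp - c J * (∑ L, c L * b K L) / Dp ^ 3))
      - ((b J I / Dp - c I * (∑ K, c K * b J K) / Dp ^ 3)
        - c J / Dp * ∑ K, c K / Dp * (b K I / Dp - c I * (∑ L, c L * b K L) / Dp ^ 3))
    = (1 / Dp) * ((b I J - b J I)
        - c J / Dp * ∑ K, c K / Dp * (b I K - b K I)
        - c I / Dp * ∑ K, c K / Dp * (b K J - b J K)) := by
  have expand : ∀ Y : Fin m,
      (∑ K, c K / Dp * (b K Y / Dp - c Y * (∑ L, c L * b K L) / Dp ^ 3))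
      = (∑ K, c K * b K Y) / Dp ^ 2
        - c Y * (∑ K, c K * (∑ L, c L * b K L)) / Dp ^ 4 := by
    intro Y
    calc (∑ K, c K / Dp * (b K Y / Dp - c Y * (∑ L, c L * b K L) / Dp ^ 3))
        = ∑ K, (c K * b K Y / Dp ^ 2 - c Y * (c K * (∑ L, c L * b K L)) / Dp ^ 4) :=
          Finset.sum_congr rfl fun K _ => by field_simp
      _ = _ := by
          rw [Finset.sum_sub_distrib, ← Finset.sum_div, ← Finset.sum_div, ← Finset.mul_sum]
  have expand2 : ∀ X : Fin m,
      (∑ K, c K / Dp * (b X K - b K X))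
      = ((∑ K, c K * b X K) - (∑ K, c K * b K X)) / Dp := by
    intro X
    calc (∑ K, c K / Dp * (b X K - b K X))
        = ∑ K, (c K * b X K - c K * b K X) / Dp :=
          Finset.sum_congr rfl fun K _ => by field_simp
      _ = _ := by rw [← Finset.sum_div, Finset.sum_sub_distrib]
  have expand3 : ∀ X : Fin m,
      (∑ K, c K / Dp * (b K X - b X K))
      = ((∑ K, c K * b K X) - (∑ K, c K * b X K)) / Dp := by
    intro X
    calc (∑ K, c K / Dp * (b K X - b X K))
        = ∑ K, (c K * b K X - c K * b X K) / Dp :=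
          Finset.sum_congr rfl fun K _ => by field_simp
      _ = _ := by rw [← Finset.sum_div, Finset.sum_sub_distrib]
  rw [expand J, expand I, expand2 I, expand3 J]
  field_simp
  ring



/-- Identity (A8): at a nonsingular point `p` of a `C²` function `u` with `C¹` field `F`,
`δ_I ν_J − δ_J ν_I = (1/D_u)(h_{IJ} − ν_J ν_K h_{IK} − ν_I ν_K h_{KJ})`. -/
theorem stmt_6 {m : ℕ} (Ω : Set (EuclideanSpace ℝ (Fin m))) (hΩ : IsOpen Ω)
    (u : EuclideanSpace ℝ (Fin m) → ℝ)
    (F : EuclideanSpace ℝ (Fin m) → EuclideanSpace ℝ (Fin m))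
    (hu : ContDiffOn ℝ 2 u Ω) (hF : ContDiffOn ℝ 1 F Ω)
    (p : EuclideanSpace ℝ (Fin m)) (hp : p ∈ Ω) (hnz : gradient u p + F p ≠ 0) :
    ∀ I J : Fin m,
      (pd (nuc u F J) p I - nuc u F I p * ∑ K, nuc u F K p * pd (nuc u F J) p K)
        - (pd (nuc u F I) p J - nuc u F J p * ∑ K, nuc u F K p * pd (nuc u F I) p K)
      = (1 / ‖gradient u p + F p‖) *
          (hmat F p I J - nuc u F J p * ∑ K, nuc u F K p * hmat F p I K
            - nuc u F I p * ∑ K, nuc u F K p * hmat F p K J) := by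
  intro I J
  classical
  let e : Fin m → EuclideanSpace ℝ (Fin m) := fun K => EuclideanSpace.single K 1
  let g : Fin m → EuclideanSpace ℝ (Fin m) → ℝ := fun K x => fderiv ℝ u x (e K) + F x K
  let q : EuclideanSpace ℝ (Fin m) → ℝ := fun x => ∑ K, g K x * g K x
  let D : EuclideanSpace ℝ (Fin m) → ℝ := fun x => Real.sqrt (q x)
  -- component identity for gradient
  have hgc : ∀ (x : EuclideanSpace ℝ (Fin m)) (K : Fin m), gradient u x K = fderiv ℝ u x (e K) := by
    intro x K
    have h1 : (inner ℝ (gradient u x) (e K) : ℝ) = fderiv ℝ u x (e K) := by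
      simp only [gradient]
      exact InnerProductSpace.toDual_symm_apply
    rw [← h1, EuclideanSpace.inner_single_right]
    simp
  have hnorm : ∀ x : EuclideanSpace ℝ (Fin m), ‖gradient u x + F x‖ = D x := by
    intro x
    rw [EuclideanSpace.norm_eq]
    congr 1
    refine Finset.sum_congr rfl fun K _ => ?_
    have : (gradient u x + F x) K = g K x := by
      simp only [PiLp.add_apply, g, hgc]
    rw [this, Real.norm_eq_abs, sq_abs, sq]
  have hnuc : ∀ J : Fin m, nuc u F J = fun x => g J x * (D x)⁻¹ := by
    intro J
    funext x
    simp only [nuc, pd, hnorm, div_eq_mul_inv, g, e]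
  -- differentiability setup
  have hmem : Ω ∈ nhds p := hΩ.mem_nhds hp
  have hu2 : ContDiffAt ℝ 2 u p := hu.contDiffAt hmem
  have hF1 : ContDiffAt ℝ 1 F p := hF.contDiffAt hmem
  have hdF : DifferentiableAt ℝ F p := hF1.differentiableAt one_ne_zero
  have hf1 : ContDiffAt ℝ 1 (fderiv ℝ u) p := hu2.fderiv_right (by norm_num)
  have hdf : DifferentiableAt ℝ (fderiv ℝ u) p := hf1.differentiableAt one_ne_zero
  set Φ := fderiv ℝ F p with hΦ
  set φ := fderiv ℝ (fderiv ℝ u) p with hφ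
  have hsymm : ∀ v w : EuclideanSpace ℝ (Fin m), φ v w = φ w v := fun v w =>
    (hu2.isSymmSndFDerivAt (by simp)) v w
  let L : Fin m → (EuclideanSpace ℝ (Fin m) →L[ℝ] ℝ) := fun K =>
    ((ContinuousLinearMap.apply ℝ ℝ (e K)).comp φ) + ((EuclideanSpace.proj K).comp Φ)
  let b : Fin m → Fin m → ℝ := fun X K => φ (e X) (e K) + Φ (e X) K
  let c : Fin m → ℝ := fun K => g K p
  set Dp := D p with hDp_def
  have hL_apply : ∀ K X : Fin m, L K (e X) = b X K := by
    intro K X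
    simp only [L, b, ContinuousLinearMap.add_apply, ContinuousLinearMap.comp_apply,
      ContinuousLinearMap.apply_apply]
    rfl
  have hFK : ∀ K : Fin m, HasFDerivAt (fun x => F x K) ((EuclideanSpace.proj K).comp Φ) p := by
    intro K
    exact (EuclideanSpace.proj K).hasFDerivAt.comp p hdF.hasFDerivAt
  have hgK : ∀ K : Fin m, HasFDerivAt (g K) (L K) p := by
    intro K
    exact (((ContinuousLinearMap.apply ℝ ℝ (e K)).hasFDerivAt.comp p hdf.hasFDerivAt).add
      (hFK K))
  let q' : EuclideanSpace ℝ (Fin m) →L[ℝ] ℝ := ∑ K, (g K p • L K + g K p • L K)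
  have hq : HasFDerivAt q q' p := HasFDerivAt.fun_sum fun K _ => (hgK K).mul (hgK K)
  have hDne : Dp ≠ 0 := by
    rw [hDp_def, ← hnorm p]
    exact norm_ne_zero_iff.mpr hnz
  have hq0 : q p ≠ 0 := by
    intro h
    apply hDne
    rw [hDp_def]
    simp only [D, h, Real.sqrt_zero]
  have hD : HasFDerivAt D ((1 / (2 * Real.sqrt (q p))) • q') p :=
    (Real.hasDerivAt_sqrt hq0).comp_hasFDerivAt p hq
  have hInv : HasFDerivAt (fun x => (D x)⁻¹)
      ((-(Dp ^ 2)⁻¹) • ((1 / (2 * Real.sqrt (q p))) • q')) p :=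
    (hasDerivAt_inv hDne).comp_hasFDerivAt p hD
  have hq'_apply : ∀ X : Fin m, q' (e X) = 2 * ∑ K, c K * b X K := by
    intro X
    simp only [q', ContinuousLinearMap.sum_apply, ContinuousLinearMap.smul_apply,
      ContinuousLinearMap.add_apply, hL_apply, smul_eq_mul]
    rw [Finset.mul_sum]
    exact Finset.sum_congr rfl fun K _ => by ring
  have hsqrtqp : Real.sqrt (q p) = Dp := rfl
  have hpd : ∀ (Y X : Fin m), pd (nuc u F Y) p X
      = b X Y / Dp - c Y * (∑ K, c K * b X K) / Dp ^ 3 := by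
    intro Y X
    have hν : HasFDerivAt (fun x => g Y x * (D x)⁻¹)
        (g Y p • ((-(Dp ^ 2)⁻¹) • ((1 / (2 * Real.sqrt (q p))) • q')) + (D p)⁻¹ • L Y) p :=
      (hgK Y).mul hInv
    rw [hnuc Y]
    have := hν.fderiv
    simp only [pd, this, ContinuousLinearMap.add_apply, ContinuousLinearMap.smul_apply,
      smul_eq_mul, hL_apply, hq'_apply, hsqrtqp]
    rw [show EuclideanSpace.single X 1 = e X from rfl, hL_apply, hq'_apply, ← hDp_def]
    have h2 : (2 : ℝ) * Dp ≠ 0 := mul_ne_zero two_ne_zero hDne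
    field_simp
    ring
  have hnuval : ∀ K : Fin m, nuc u F K p = c K / Dp := by
    intro K
    rw [hnuc K]
    simp only [div_eq_mul_inv]
    rfl
  have hmEq : ∀ X Y : Fin m, hmat F p X Y = b X Y - b Y X := by
    intro X Y
    have h1 : pd (fun x => F x Y) p X = Φ (e X) Y := by
      simp only [pd, (hFK Y).fderiv]
      rfl
    have h2 : pd (fun x => F x X) p Y = Φ (e Y) X := by
      simp only [pd, (hFK X).fderiv]
      rfl
    simp only [hmat, h1, h2, b]
    rw [hsymm (e X) (e Y)]
    ring
  rw [hnorm p]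
  simp only [hpd, hnuval, hmEq]
  exact alg_aux b c Dp hDne I J
end

section
/- Let Ω be a bounded domain (bounded open connected set) in ℝ^m. Let u ∈ C¹(Ω) be real-valued and F = (F_1, …, F_m) ∈ C¹(Ω, ℝ^m). Let (a^{jk})_{1 ≤ j,k ≤ m} be real constants with a^{jk} + a^{kj} = 0, and suppose that div F^b := Σ_{j,k=1}^m a^{jk} ∂_j F_k > 0 at every point of Ω (or < 0 at every point of Ω). Then the singular set S_F(u) := {p ∈ Ω : ∇u(p) + F(p) = 0} is nowhere dense in Ω. -/
/-- Proposition 3.4: if `Ω ⊆ ℝ^m` is a bounded domain, `u ∈ C¹(Ω)`, `F ∈ C¹(Ω, ℝ^m)`, and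
`div F^b = Σ_{j,k} a^{jk} ∂_j F_k` is everywhere positive (or everywhere negative) on `Ω`
for skew-symmetric constants `a^{jk}`, then the singular set
`S_F(u) = {p ∈ Ω : ∇u(p) + F(p) = 0}` is nowhere dense in `Ω`
(its closure in `Ω` has empty interior). -/
theorem stmt_7 {m : ℕ} (Ω : Set (EuclideanSpace ℝ (Fin m))) (hΩ : IsOpen Ω)
    (hconn : IsConnected Ω) (hbdd : Bornology.IsBounded Ω)
    (u : EuclideanSpace ℝ (Fin m) → ℝ)
    (F : EuclideanSpace ℝ (Fin m) → EuclideanSpace ℝ (Fin m))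
    (hu : ContDiffOn ℝ 1 u Ω) (hF : ContDiffOn ℝ 1 F Ω)
    (a : Fin m → Fin m → ℝ) (ha : ∀ j k, a j k + a k j = 0)
    (hdiv : (∀ p ∈ Ω, 0 < ∑ j, ∑ k, a j k * pd (fun x => F x k) p j)
          ∨ (∀ p ∈ Ω, ∑ j, ∑ k, a j k * pd (fun x => F x k) p j < 0)) :
    interior (closure {p | p ∈ Ω ∧ gradient u p + F p = 0} ∩ Ω) = ∅ := by
  classical
  set S : Set (EuclideanSpace ℝ (Fin m)) :=
    {p | p ∈ Ω ∧ gradient u p + F p = 0} with hS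
  by_contra hne
  obtain ⟨p, hp⟩ := Set.nonempty_iff_ne_empty.2 hne
  set V : Set (EuclideanSpace ℝ (Fin m)) := interior (closure S ∩ Ω) with hV
  have hVopen : IsOpen V := isOpen_interior
  have hVΩ : V ⊆ Ω := interior_subset.trans Set.inter_subset_right
  have hVcl : V ⊆ closure S := interior_subset.trans Set.inter_subset_left
  have hpΩ : p ∈ Ω := hVΩ hp
  -- continuity of gradient u + F on Ω
  have hfd : ContinuousOn (fderiv ℝ u) Ω := hu.continuousOn_fderiv_of_isOpen hΩ le_rfl
  have hgrad : ContinuousOn (gradient u) Ω :=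
    (InnerProductSpace.toDual ℝ (EuclideanSpace ℝ (Fin m))).symm.continuous.comp_continuousOn hfd
  have hg : ContinuousOn (fun x => gradient u x + F x) Ω := hgrad.add hF.continuousOn
  -- Step A: on V, gradient u + F = 0
  have hVzero : ∀ q ∈ V, gradient u q + F q = 0 := by
    intro q hq
    have hca : ContinuousAt (fun x => gradient u x + F x) q :=
      hg.continuousAt (hΩ.mem_nhds (hVΩ hq))
    have h1 : (fun x => gradient u x + F x) q ∈
        closure ((fun x => gradient u x + F x) '' S) :=
      hca.continuousWithinAt.mem_closure_image (hVcl hq)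
    have h2 : (fun x => gradient u x + F x) '' S ⊆ ({0} : Set (EuclideanSpace ℝ (Fin m))) := by
      rintro _ ⟨x, hx, rfl⟩; exact hx.2
    have h3 := closure_mono h2 h1
    rw [closure_singleton] at h3
    exact h3
  -- the candidate derivative of u : φ x = -(toDual (F x))
  set φ : EuclideanSpace ℝ (Fin m) → (EuclideanSpace ℝ (Fin m) →L[ℝ] ℝ) :=
    fun x => -(InnerProductSpace.toDual ℝ (EuclideanSpace ℝ (Fin m)) (F x)) with hφdef
  have hFdiff : DifferentiableAt ℝ F p :=
    (hF.differentiableOn one_ne_zero).differentiableAt (hΩ.mem_nhds hpΩ)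
  have hφdiff : DifferentiableAt ℝ φ p :=
    ((InnerProductSpace.toDual ℝ
      (EuclideanSpace ℝ (Fin m))).toContinuousLinearEquiv.differentiableAt.comp p hFdiff).neg
  set f'' := fderiv ℝ φ p with hf''def
  have hφfd : HasFDerivAt φ f'' p := hφdiff.hasFDerivAt
  -- u has derivative φ y at every y near p
  have hmem : ∀ᶠ y in nhds p, HasFDerivAt u (φ y) y := by
    filter_upwards [hVopen.mem_nhds hp] with y hy
    have hud : DifferentiableAt ℝ u y :=
      (hu.differentiableOn one_ne_zero).differentiableAt (hΩ.mem_nhds (hVΩ hy))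
    have h0 : gradient u y = -F y := eq_neg_of_add_eq_zero_left (hVzero y hy)
    have h1 : fderiv ℝ u y = φ y := by
      have := congrArg (InnerProductSpace.toDual ℝ (EuclideanSpace ℝ (Fin m))) h0
      rw [gradient, LinearIsometryEquiv.apply_symm_apply, map_neg] at this
      simpa [hφdef] using this
    exact h1 ▸ hud.hasFDerivAt
  -- symmetry of the second derivative
  have hsymm : ∀ v w, f'' v w = f'' w v := fun v w =>
    second_derivative_symmetric_of_eventually_of_real hmem hφfd v w
  -- computing pd of F-components via f''
  have hpd : ∀ j k : Fin m, pd (fun x => F x k) p j =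
      -(f'' (EuclideanSpace.single j 1) (EuclideanSpace.single k 1)) := by
    intro j k
    have heq : (fun x => F x k) =
        fun x => -(φ x (EuclideanSpace.single k 1)) := by
      funext x
      simp [hφdef, InnerProductSpace.toDual_apply_apply, EuclideanSpace.inner_single_right]
    have hd : HasFDerivAt (fun x => φ x (EuclideanSpace.single k 1))
        ((φ p).comp (0 : EuclideanSpace ℝ (Fin m) →L[ℝ] EuclideanSpace ℝ (Fin m))
          + f''.flip (EuclideanSpace.single k 1)) p :=
      hφfd.clm_apply (hasFDerivAt_const (EuclideanSpace.single k 1) p)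
    have hd' : HasFDerivAt (fun x => -(φ x (EuclideanSpace.single k 1))) _ p := hd.neg
    rw [pd, heq, hd'.fderiv]
    simp
  -- the divergence sum vanishes at p
  have key : (∑ j, ∑ k, a j k *
      f'' (EuclideanSpace.single j 1) (EuclideanSpace.single k 1)) = 0 := by
    have hT : (∑ j, ∑ k, a j k *
        f'' (EuclideanSpace.single j 1) (EuclideanSpace.single k 1))
        = ∑ j, ∑ k, -(a j k *
          f'' (EuclideanSpace.single j 1) (EuclideanSpace.single k 1)) := by
      rw [Finset.sum_comm]
      refine Finset.sum_congr rfl fun x _ => Finset.sum_congr rfl fun y _ => ?_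
      rw [hsymm (EuclideanSpace.single y 1) (EuclideanSpace.single x 1)]
      have h1 : a y x = -(a x y) := by linarith [ha x y]
      rw [h1]; ring
    have h2 : (∑ j, ∑ k, a j k *
        f'' (EuclideanSpace.single j 1) (EuclideanSpace.single k 1))
        = -(∑ j, ∑ k, a j k *
          f'' (EuclideanSpace.single j 1) (EuclideanSpace.single k 1)) := by
      conv_lhs => rw [hT]
      simp [Finset.sum_neg_distrib]
    linarith
  have hz : (∑ j, ∑ k, a j k * pd (fun x => F x k) p j) = 0 := by
    simp only [hpd]
    calc (∑ j, ∑ k, a j k *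
        -(f'' (EuclideanSpace.single j 1) (EuclideanSpace.single k 1)))
        = -(∑ j, ∑ k, a j k *
          f'' (EuclideanSpace.single j 1) (EuclideanSpace.single k 1)) := by
          simp [mul_neg, Finset.sum_neg_distrib]
      _ = 0 := by rw [key, neg_zero]
  obtain hdiv | hdiv := hdiv <;>
  · have hd := hdiv p hpΩ
    rw [hz] at hd
    exact lt_irrefl 0 hd
end

section
/- Let m = 2 and consider F(x, y) = (−y, x), u(x, y) = x y and v(x, y) = x y + y on ℝ². Then for every point (x, y) with x > 0: ∇u + F ≠ 0, ∇v + F ≠ 0, and the horizontal normals agree, (∇u + F)/|∇u + F| = (∇v + F)/|∇v + F| = (0, 1); nevertheless ∇u ≠ ∇v at every such point. Hence in dimension 2 the equality of horizontal normals on an open set does not imply equality of gradients. -/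
/-- The vector field `F(x, y) = (−y, x)` on `ℝ²` (the `p`-area situation). -/
noncomputable def Fex (p : EuclideanSpace ℝ (Fin 2)) : EuclideanSpace ℝ (Fin 2) :=
  WithLp.toLp 2 ![-(p 1), p 0]

/-- `u(x, y) = x y`. -/
noncomputable def uex (p : EuclideanSpace ℝ (Fin 2)) : ℝ := p 0 * p 1

/-- `v(x, y) = x y + y`. -/
noncomputable def vex (p : EuclideanSpace ℝ (Fin 2)) : ℝ := p 0 * p 1 + p 1

noncomputable def gvec (a b : ℝ) : EuclideanSpace ℝ (Fin 2) :=
  EuclideanSpace.single 0 a + EuclideanSpace.single 1 b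

lemma hasGradientAt_uex (p : EuclideanSpace ℝ (Fin 2)) :
    HasGradientAt uex (gvec (p 1) (p 0)) p := by
  rw [hasGradientAt_iff_hasFDerivAt]
  have h0 := (EuclideanSpace.proj (0 : Fin 2) (𝕜 := ℝ)).hasFDerivAt (x := p)
  have h1 := (EuclideanSpace.proj (1 : Fin 2) (𝕜 := ℝ)).hasFDerivAt (x := p)
  have h := h0.mul h1
  have heq : (⇑(EuclideanSpace.proj (0 : Fin 2) (𝕜 := ℝ)) * ⇑(EuclideanSpace.proj (1 : Fin 2) (𝕜 := ℝ)))
      = uex := rfl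
  rw [heq] at h
  refine h.congr_fderiv ?_
  ext x
  simp [gvec, PiLp.inner_apply, Fin.sum_univ_two, EuclideanSpace.single_apply]
  ring

lemma hasGradientAt_vex (p : EuclideanSpace ℝ (Fin 2)) :
    HasGradientAt vex (gvec (p 1) (p 0 + 1)) p := by
  rw [hasGradientAt_iff_hasFDerivAt]
  have h0 := (EuclideanSpace.proj (0 : Fin 2) (𝕜 := ℝ)).hasFDerivAt (x := p)
  have h1 := (EuclideanSpace.proj (1 : Fin 2) (𝕜 := ℝ)).hasFDerivAt (x := p)
  have h := (h0.mul h1).add h1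
  have heq : (⇑(EuclideanSpace.proj (0 : Fin 2) (𝕜 := ℝ)) * ⇑(EuclideanSpace.proj (1 : Fin 2) (𝕜 := ℝ))
      + ⇑(EuclideanSpace.proj (1 : Fin 2) (𝕜 := ℝ))) = vex := rfl
  rw [heq] at h
  refine h.congr_fderiv ?_
  ext x
  simp [gvec, PiLp.inner_apply, Fin.sum_univ_two, EuclideanSpace.single_apply]
  ring

lemma gvec_apply0 (a b : ℝ) : gvec a b 0 = a := by
  simp [gvec, EuclideanSpace.single_apply]
lemma gvec_apply1 (a b : ℝ) : gvec a b 1 = b := by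
  simp [gvec, EuclideanSpace.single_apply]

/-- Example 2.2: for `F = (−y, x)`, `u = xy`, `v = xy + y`, on the half-plane `{x > 0}`
both `∇u + F` and `∇v + F` are nonzero, the horizontal normals agree and equal `(0, 1)`,
yet `∇u ≠ ∇v` everywhere there: equality of horizontal normals on an open set does not
imply equality of gradients in dimension 2. -/
theorem stmt_9 :
    ∀ p : EuclideanSpace ℝ (Fin 2), 0 < p 0 →
      gradient uex p + Fex p ≠ 0 ∧
      gradient vex p + Fex p ≠ 0 ∧
      ‖gradient uex p + Fex p‖⁻¹ • (gradient uex p + Fex p)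
        = ‖gradient vex p + Fex p‖⁻¹ • (gradient vex p + Fex p) ∧
      ‖gradient uex p + Fex p‖⁻¹ • (gradient uex p + Fex p)
        = EuclideanSpace.single (1 : Fin 2) (1 : ℝ) ∧
      gradient uex p ≠ gradient vex p := by
  intro p hp
  have hgu : gradient uex p = gvec (p 1) (p 0) := (hasGradientAt_uex p).gradient
  have hgv : gradient vex p = gvec (p 1) (p 0 + 1) := (hasGradientAt_vex p).gradient
  have hu : gradient uex p + Fex p = EuclideanSpace.single (1 : Fin 2) (2 * p 0) := by
    rw [hgu]; ext i; fin_cases i <;>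
      simp [gvec, Fex, EuclideanSpace.single_apply, PiLp.add_apply] <;> ring
  have hv : gradient vex p + Fex p = EuclideanSpace.single (1 : Fin 2) (2 * p 0 + 1) := by
    rw [hgv]; ext i; fin_cases i <;>
      simp [gvec, Fex, EuclideanSpace.single_apply, PiLp.add_apply] <;> ring
  have h2 : (0:ℝ) < 2 * p 0 := by linarith
  have h3 : (0:ℝ) < 2 * p 0 + 1 := by linarith
  have nu : ‖gradient uex p + Fex p‖ = 2 * p 0 := by
    rw [hu, EuclideanSpace.norm_single, Real.norm_eq_abs, abs_of_pos h2]
  have nv : ‖gradient vex p + Fex p‖ = 2 * p 0 + 1 := by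
    rw [hv, EuclideanSpace.norm_single, Real.norm_eq_abs, abs_of_pos h3]
  have key_u : ‖gradient uex p + Fex p‖⁻¹ • (gradient uex p + Fex p)
      = EuclideanSpace.single (1 : Fin 2) (1 : ℝ) := by
    rw [nu, hu]; ext i
    simp only [PiLp.smul_apply, EuclideanSpace.single_apply, smul_eq_mul, mul_ite, mul_zero]
    split <;> [exact inv_mul_cancel₀ h2.ne'; rfl]
  have key_v : ‖gradient vex p + Fex p‖⁻¹ • (gradient vex p + Fex p)
      = EuclideanSpace.single (1 : Fin 2) (1 : ℝ) := by
    rw [nv, hv]; ext i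
    simp only [PiLp.smul_apply, EuclideanSpace.single_apply, smul_eq_mul, mul_ite, mul_zero]
    split <;> [exact inv_mul_cancel₀ h3.ne'; rfl]
  refine ⟨?_, ?_, key_u.trans key_v.symm, key_u, ?_⟩
  · rw [hu]; intro h
    have := congrArg (· 1) h
    simp [EuclideanSpace.single_apply] at this
    linarith
  · rw [hv]; intro h
    have := congrArg (· 1) h
    simp [EuclideanSpace.single_apply] at this
    linarith
  · rw [hgu, hgv]; intro h
    have := congrArg (· 1) h
    rw [gvec_apply1, gvec_apply1] at this
    linarith
end

section
/- Let h be a skew-symmetric real m×m matrix (m ≥ 2) and let ν ∈ ℝ^m be a unit vector. If ν_K h_{IJ} + ν_I h_{JK} + ν_J h_{KI} = 0 for all indices I, J, K ∈ {1,…,m}, then the rank of h is at most 2. Consequently, if rank(h) ≥ 3 then for every unit vector ν there exist indices I, J, K with ν_K h_{IJ} + ν_I h_{JK} + ν_J h_{KI} ≠ 0. -/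
open Matrix

/-- For a skew-symmetric real `m×m` matrix `h` (`m ≥ 2`): if for some unit vector `ν` the
cyclic sums `ν_K h_{IJ} + ν_I h_{JK} + ν_J h_{KI}` all vanish, then `rank h ≤ 2`;
consequently, if `rank h ≥ 3`, then for every unit vector `ν` some cyclic sum is nonzero. -/
theorem stmt_10 {m : ℕ} (hm : 2 ≤ m) (h : Matrix (Fin m) (Fin m) ℝ)
    (hskew : h + hᵀ = 0) :
    (∀ ν : Fin m → ℝ, (∑ i, ν i ^ 2 = 1) →
      (∀ I J K : Fin m, ν K * h I J + ν I * h J K + ν J * h K I = 0) → h.rank ≤ 2) ∧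
    (3 ≤ h.rank → ∀ ν : Fin m → ℝ, (∑ i, ν i ^ 2 = 1) →
      ∃ I J K : Fin m, ν K * h I J + ν I * h J K + ν J * h K I ≠ 0) := by
  have hskew' : ∀ I J, h J I = - h I J := by
    intro I J
    have := congrFun (congrFun hskew J) I
    simp only [Matrix.add_apply, Matrix.transpose_apply, Matrix.zero_apply] at this
    linarith
  have key : ∀ ν : Fin m → ℝ, (∑ i, ν i ^ 2 = 1) →
      (∀ I J K : Fin m, ν K * h I J + ν I * h J K + ν J * h K I = 0) → h.rank ≤ 2 := by
    intro ν hν hcyc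
    set a : Fin m → ℝ := h *ᵥ ν with ha
    have hIJ : ∀ I J, h I J = a I * ν J - ν I * a J := by
      intro I J
      have hsum : ∑ K, ν K * (ν K * h I J + ν I * h J K + ν J * h K I) = 0 := by
        simp [hcyc]
      have e1 : (∑ K, ν K ^ 2) * h I J + ν I * (∑ K, ν K * h J K)
          + ν J * (∑ K, ν K * h K I) = 0 := by
        rw [Finset.sum_mul, Finset.mul_sum, Finset.mul_sum, ← Finset.sum_add_distrib,
          ← Finset.sum_add_distrib, ← hsum]
        exact Finset.sum_congr rfl fun K _ => by ring
      have e2 : (∑ K, ν K * h J K) = a J := by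
        rw [ha]
        simp [Matrix.mulVec, dotProduct, mul_comm]
      have e3 : (∑ K, ν K * h K I) = - a I := by
        rw [ha]
        simp only [Matrix.mulVec, dotProduct]
        rw [← Finset.sum_neg_distrib]
        exact Finset.sum_congr rfl fun K _ => by rw [hskew' I K]; ring
      rw [hν, e2, e3] at e1
      linarith
    -- factor h = C * R
    set C : Matrix (Fin m) (Fin 2) ℝ := fun I k => if k = 0 then a I else ν I with hC
    set R : Matrix (Fin 2) (Fin m) ℝ := fun k J => if k = 0 then ν J else -(a J) with hR
    have hfac : h = C * R := by
      ext I J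
      rw [hIJ I J]
      rw [Matrix.mul_apply, Fin.sum_univ_two]
      simp [Matrix.mul_apply, Fin.sum_univ_two, hC, hR]
      ring
    calc h.rank = (C * R).rank := by rw [hfac]
      _ ≤ C.rank := Matrix.rank_mul_le_left C R
      _ ≤ Fintype.card (Fin 2) := Matrix.rank_le_card_width C
      _ = 2 := by simp
  refine ⟨key, ?_⟩
  intro hr ν hν
  by_contra hcon
  push_neg at hcon
  have := key ν hν hcon
  omega
end

section
/- Let U be a real m×m matrix (m ≥ 2) with U = −Uᵀ and rank(U) = 2, and let ν ∈ ℝ^m be a vector with U ν ≠ 0. Set ρ := −‖U² ν‖² / ‖U ν‖². Then U ν and U² ν are eigenvectors of U² with the common eigenvalue ρ, i.e., U²(U ν) = ρ U ν and U²(U² ν) = ρ U² ν. -/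
open Matrix

/-- Proposition A.1 (5): if `U` is a real skew-symmetric `m×m` matrix of rank `2` (`m ≥ 2`)
and `U ν ≠ 0`, then `U ν` and `U² ν` are eigenvectors of `U²` with the common eigenvalue
`ρ = −‖U² ν‖²/‖U ν‖²`. -/
theorem stmt_14 {m : ℕ} (hm : 2 ≤ m) (U : Matrix (Fin m) (Fin m) ℝ)
    (hskew : U = -Uᵀ) (hrank : U.rank = 2) (ν : Fin m → ℝ) (hν : U.mulVec ν ≠ 0)
    (ρ : ℝ)
    (hρ : ρ = -(∑ i, ((U * U).mulVec ν i) ^ 2) / (∑ i, (U.mulVec ν i) ^ 2)) :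
    (U * U).mulVec (U.mulVec ν) = ρ • U.mulVec ν ∧
    (U * U).mulVec ((U * U).mulVec ν) = ρ • (U * U).mulVec ν := by
  -- notation
  set a : Fin m → ℝ := U.mulVec ν with ha
  have hb' : (U * U).mulVec ν = U.mulVec a := by rw [← Matrix.mulVec_mulVec]
  set b : Fin m → ℝ := U.mulVec a with hbdef
  rw [hb'] at hρ ⊢
  -- skew pairing
  have hsk : ∀ x y : Fin m → ℝ, U.mulVec x ⬝ᵥ y = -(x ⬝ᵥ U.mulVec y) := by
    intro x y
    nth_rewrite 2 [hskew]
    rw [Matrix.neg_mulVec, dotProduct_neg, neg_neg, Matrix.mulVec_transpose,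
      dotProduct_comm x, ← Matrix.dotProduct_mulVec, dotProduct_comm]
  have hskself : ∀ x : Fin m → ℝ, x ⬝ᵥ U.mulVec x = 0 := by
    intro x
    have := hsk x x
    rw [dotProduct_comm] at this
    linarith
  -- sums of squares as dot products
  have hsq : ∀ v : Fin m → ℝ, (∑ i, (v i) ^ 2) = v ⬝ᵥ v := by
    intro v; simp [dotProduct, sq]
  have hab : a ⬝ᵥ b = 0 := hskself a
  have haa : a ⬝ᵥ a ≠ 0 := fun h => hν (dotProduct_self_eq_zero.mp h)
  by_cases hb0 : b = 0
  · have hρ0 : ρ = 0 := by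
      rw [hρ, hb0]; simp
    constructor
    · rw [← Matrix.mulVec_mulVec, ← hbdef, hb0, hρ0, zero_smul, Matrix.mulVec_zero]
    · rw [← Matrix.mulVec_mulVec, hb0, hρ0, zero_smul, Matrix.mulVec_zero, Matrix.mulVec_zero]
  · -- b ≠ 0 case
    have hbb : b ⬝ᵥ b ≠ 0 := fun h => hb0 (dotProduct_self_eq_zero.mp h)
    -- linear independence of a, b
    have hli : LinearIndependent ℝ ![a, b] := by
      rw [LinearIndependent.pair_iff]
      intro s t hst
      have h1 : a ⬝ᵥ (s • a + t • b) = s * (a ⬝ᵥ a) := by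
        rw [dotProduct_add, dotProduct_smul, dotProduct_smul, hab]
        ring_nf
      have h2 : b ⬝ᵥ (s • a + t • b) = t * (b ⬝ᵥ b) := by
        rw [dotProduct_add, dotProduct_smul, dotProduct_smul,
          dotProduct_comm b a, hab]
        ring_nf
      rw [hst, dotProduct_zero] at h1 h2
      constructor
      · exact by
          rcases mul_eq_zero.mp h1.symm with h | h
          · exact h
          · exact absurd h haa
      · exact by
          rcases mul_eq_zero.mp h2.symm with h | h
          · exact h
          · exact absurd h hbb
    -- span {a,b} equals range of mulVecLin
    have hale : a ∈ LinearMap.range U.mulVecLin := ⟨ν, rfl⟩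
    have hble : b ∈ LinearMap.range U.mulVecLin := ⟨a, rfl⟩
    have hspan_le : Submodule.span ℝ {a, b} ≤ LinearMap.range U.mulVecLin := by
      rw [Submodule.span_le]
      intro x hx
      rcases hx with h | h
      · exact h ▸ hale
      · simp only [Set.mem_singleton_iff] at h; exact h ▸ hble
    have hfr : Module.finrank ℝ (Submodule.span ℝ {a, b}) = 2 := by
      have := finrank_span_eq_card hli
      have hrange : Set.range ![a, b] = {a, b} := by
        ext x; simp [Matrix.range_cons, Matrix.range_empty]; tauto
      rw [hrange] at this
      simpa using this
    have hfrange : Module.finrank ℝ (LinearMap.range U.mulVecLin) = 2 := hrank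
    have hspan_eq : Submodule.span ℝ {a, b} = LinearMap.range U.mulVecLin :=
      Submodule.eq_of_le_of_finrank_le hspan_le (by rw [hfr, hfrange])
    -- U b ∈ span {a, b}
    have hUb : U.mulVec b ∈ Submodule.span ℝ ({a, b} : Set (Fin m → ℝ)) := by
      rw [hspan_eq]; exact ⟨b, rfl⟩
    rcases Submodule.mem_span_pair.mp hUb with ⟨c, d, hcd⟩
    -- compute c and d
    have hc : c * (a ⬝ᵥ a) = -(b ⬝ᵥ b) := by
      have h1 : a ⬝ᵥ U.mulVec b = c * (a ⬝ᵥ a) := by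
        rw [← hcd, dotProduct_add, dotProduct_smul, dotProduct_smul, hab]
        simp [smul_eq_mul]
      have h2 : a ⬝ᵥ U.mulVec b = -(b ⬝ᵥ b) := by
        have := hsk a b
        rw [dotProduct_comm] at this
        have hba : b ⬝ᵥ b = U.mulVec a ⬝ᵥ b := by rw [hbdef]
        linarith [hsk a b, hba]
      linarith
    have hd : d * (b ⬝ᵥ b) = 0 := by
      have h1 : b ⬝ᵥ U.mulVec b = d * (b ⬝ᵥ b) := by
        rw [← hcd, dotProduct_add, dotProduct_smul, dotProduct_smul,
          dotProduct_comm b a, hab]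
        simp [smul_eq_mul]
      rw [hskself b] at h1
      linarith
    have hd0 : d = 0 := by
      rcases mul_eq_zero.mp hd with h | h
      · exact h
      · exact absurd h hbb
    have hcρ : c = ρ := by
      rw [hρ, hsq, hsq]
      field_simp
      linarith [hc]
    have hUbρ : U.mulVec b = ρ • a := by
      rw [← hcd, hd0, zero_smul, add_zero, hcρ]
    constructor
    · rw [← Matrix.mulVec_mulVec, ← hbdef, hUbρ]
    · rw [← Matrix.mulVec_mulVec, hUbρ, Matrix.mulVec_smul, ← hbdef]
end

section
/- Let U be a real m×m matrix (m ≥ 2) with U = −Uᵀ and rank(U) = 2. Let ν ∈ ℝ^m be a unit column vector satisfying U² ν = ρ ν for some nonzero real number ρ. Then U = (U ν) νᵀ − ν (U ν)ᵀ. -/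
open Matrix

/-- Proposition A.2 (forward direction): if `U` is a real skew-symmetric `m×m` matrix of
rank `2` (`m ≥ 2`), and `ν` is a unit vector with `U² ν = ρ ν` for some nonzero `ρ`, then
`U = (U ν) νᵀ − ν (U ν)ᵀ`. -/
theorem stmt_15 {m : ℕ} (hm : 2 ≤ m) (U : Matrix (Fin m) (Fin m) ℝ)
    (hskew : U = -Uᵀ) (hrank : U.rank = 2) (ν : Fin m → ℝ) (hunit : ∑ i, ν i ^ 2 = 1)
    (ρ : ℝ) (hρ : ρ ≠ 0) (heig : (U * U).mulVec ν = ρ • ν) :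
    U = Matrix.vecMulVec (U.mulVec ν) ν - Matrix.vecMulVec ν (U.mulVec ν) := by
  set w : Fin m → ℝ := U.mulVec ν with hw
  have hT : Uᵀ = -U := by nth_rewrite 1 [hskew]; simp
  have hνν : ν ⬝ᵥ ν = 1 := by
    simpa [dotProduct, sq] using hunit
  -- skew symmetry dot product identity
  have hdot : ∀ x y : Fin m → ℝ, x ⬝ᵥ U.mulVec y = -(U.mulVec x ⬝ᵥ y) := by
    intro x y
    rw [dotProduct_mulVec, ← mulVec_transpose, hT, neg_mulVec, neg_dotProduct]
  -- U w = ρ • ν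
  have hUw : U.mulVec w = ρ • ν := by
    rw [hw, mulVec_mulVec]; exact heig
  -- ν ⬝ w = 0
  have hνw : ν ⬝ᵥ w = 0 := by
    have h := hdot ν ν
    have hc : w ⬝ᵥ ν = ν ⬝ᵥ w := dotProduct_comm _ _
    rw [← hw] at h
    linarith [h, hc]
  -- ρ = -(w ⬝ w)
  have hρw : ρ = -(w ⬝ᵥ w) := by
    have h := hdot ν w
    rw [← hw, hUw] at h
    have h' : ν ⬝ᵥ (ρ • ν) = ρ := by simp [dotProduct_smul, hνν]
    linarith [h, h']
  have hww : w ⬝ᵥ w ≠ 0 := fun h => hρ (by rw [hρw, h, neg_zero])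
  -- span {ν, w} equals range of mulVecLin U
  have hmemw : w ∈ LinearMap.range U.mulVecLin := ⟨ν, rfl⟩
  have hmemν : ν ∈ LinearMap.range U.mulVecLin := by
    refine ⟨ρ⁻¹ • w, ?_⟩
    simp [mulVecLin_apply, mulVec_smul, hUw, smul_smul, inv_mul_cancel₀ hρ]
  have hli : LinearIndependent ℝ ![ν, w] := by
    rw [LinearIndependent.pair_iff]
    intro a b hab
    have h1 : ν ⬝ᵥ (a • ν + b • w) = a := by
      simp [dotProduct_add, dotProduct_smul, hνν, hνw]
    have h2 : w ⬝ᵥ (a • ν + b • w) = b * (w ⬝ᵥ w) := by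
      have hwv : w ⬝ᵥ ν = 0 := by rw [dotProduct_comm]; exact hνw
      simp [dotProduct_add, dotProduct_smul, hwv]
    rw [hab] at h1 h2
    rw [dotProduct_zero] at h1 h2
    refine ⟨h1.symm, ?_⟩
    exact (mul_eq_zero.mp h2.symm).resolve_right hww
  have hspan_le : Submodule.span ℝ ({ν, w} : Set (Fin m → ℝ)) ≤ LinearMap.range U.mulVecLin := by
    rw [Submodule.span_le]
    rintro x (rfl | rfl)
    · exact hmemν
    · exact hmemw
  have hfr : Module.finrank ℝ (Submodule.span ℝ ({ν, w} : Set (Fin m → ℝ))) = 2 := by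
    have hset : ({ν, w} : Set (Fin m → ℝ)) = Set.range ![ν, w] := by
      ext x
      simp [Fin.exists_fin_two, or_comm]
    rw [hset, finrank_span_eq_card hli]
    simp
  have hspan_eq : Submodule.span ℝ ({ν, w} : Set (Fin m → ℝ)) = LinearMap.range U.mulVecLin := by
    apply Submodule.eq_of_le_of_finrank_le hspan_le
    rw [hfr]
    exact le_of_eq hrank
  -- pointwise description of U
  have key : ∀ x : Fin m → ℝ, U.mulVec x = (ν ⬝ᵥ x) • w - (w ⬝ᵥ x) • ν := by
    intro x
    have hmem : U.mulVec x ∈ Submodule.span ℝ ({ν, w} : Set (Fin m → ℝ)) := by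
      rw [hspan_eq]; exact ⟨x, rfl⟩
    obtain ⟨a, b, hab⟩ := Submodule.mem_span_pair.mp hmem
    have h1 : ν ⬝ᵥ (a • ν + b • w) = a := by
      simp [dotProduct_add, dotProduct_smul, hνν, hνw]
    have h2 : w ⬝ᵥ (a • ν + b • w) = b * (w ⬝ᵥ w) := by
      have hwv : w ⬝ᵥ ν = 0 := by rw [dotProduct_comm]; exact hνw
      simp [dotProduct_add, dotProduct_smul, hwv]
    rw [hab] at h1 h2
    have ha : a = -(w ⬝ᵥ x) := by rw [← h1, hdot ν x]
    have h3 : w ⬝ᵥ U.mulVec x = (w ⬝ᵥ w) * (ν ⬝ᵥ x) := by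
      rw [hdot w x, hUw, smul_dotProduct, hρw]; simp [smul_eq_mul]
    have hb : b = ν ⬝ᵥ x := by
      have hbw : b * (w ⬝ᵥ w) = (ν ⬝ᵥ x) * (w ⬝ᵥ w) := by
        rw [← h2, h3, mul_comm]
      exact mul_right_cancel₀ hww hbw
    rw [← hab, ha, hb]
    module
  -- conclude matrix equality via columns
  ext i j
  have h := congrFun (key (Pi.single j 1)) i
  simp only [mulVec_single_one, col_apply] at h
  have hsj : ν ⬝ᵥ Pi.single j 1 = ν j := by simp
  have hwj : w ⬝ᵥ Pi.single j 1 = w j := by simp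
  rw [hsj, hwj] at h
  simp only [Matrix.sub_apply, vecMulVec_apply, ← hw]
  rw [h]
  simp [Pi.smul_apply, Pi.sub_apply]
  ring
end

section
/- Let h be a skew-symmetric real m×m matrix (m ≥ 2), i.e., h + hᵀ = 0, and let ν ∈ ℝ^m be a unit column vector satisfying h − h ν νᵀ − ν νᵀ h = 0. Then the trace of h² satisfies Tr(h²) = −2 ‖h ν‖². -/
open Matrix

/-- Equation (A13): if `h` is a skew-symmetric real `m×m` matrix (`m ≥ 2`) and `ν` a unit
column vector with `h − h ν νᵀ − ν νᵀ h = 0`, then `Tr(h²) = −2 ‖h ν‖²`. -/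
theorem stmt_19 {m : ℕ} (hm : 2 ≤ m) (h : Matrix (Fin m) (Fin m) ℝ)
    (hskew : h + hᵀ = 0) (ν : Fin m → ℝ) (hunit : ∑ i, ν i ^ 2 = 1)
    (heq : h - h * Matrix.vecMulVec ν ν - Matrix.vecMulVec ν ν * h = 0) :
    (h * h).trace = -2 * ∑ i, (h.mulVec ν i) ^ 2 := by
  set P := Matrix.vecMulVec ν ν with hP
  have hT : hᵀ = -h := eq_neg_of_add_eq_zero_right hskew
  have hh : h = h * P + P * h := by
    rw [sub_sub] at heq
    exact sub_eq_zero.mp heq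
  -- Tr(h²) = 2 Tr(h²P)
  have tr2 : (h * h).trace = 2 * (h * h * P).trace := by
    conv_lhs => rw [show h * h = h * (h * P + P * h) by rw [← hh]]
    rw [mul_add, trace_add, ← mul_assoc, ← mul_assoc]
    rw [show (h * P * h).trace = (h * h * P).trace from by
      rw [Matrix.trace_mul_cycle]]
    ring
  -- Tr(h²P) = ν ⬝ (h²ν) = -(hν)⬝(hν)
  have trP : (h * h * P).trace = - ∑ i, (h.mulVec ν i) ^ 2 := by
    simp only [hP, Matrix.trace, Matrix.diag, Matrix.mul_apply, Matrix.vecMulVec_apply,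
      Matrix.mulVec, dotProduct]
    have hsk : ∀ i j, h i j = - h j i := by
      intro i j
      have := congrFun (congrFun hT j) i
      simpa [Matrix.transpose_apply] using this
    calc ∑ i, ∑ x, (∑ k, h i k * h k x) * (ν x * ν i)
        = ∑ i, ∑ x, ∑ k, (h i k * ν i) * (h k x * ν x) := by
          refine Finset.sum_congr rfl fun i _ => Finset.sum_congr rfl fun x _ => ?_
          rw [Finset.sum_mul]
          exact Finset.sum_congr rfl fun k _ => by ring
      _ = ∑ i, ∑ k, ∑ x, (h i k * ν i) * (h k x * ν x) :=
          Finset.sum_congr rfl fun i _ => Finset.sum_comm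
      _ = ∑ k, ∑ i, ∑ x, (h i k * ν i) * (h k x * ν x) := Finset.sum_comm
      _ = ∑ k, (∑ i, h i k * ν i) * (∑ x, h k x * ν x) := by
          refine Finset.sum_congr rfl fun k _ => ?_
          rw [Finset.sum_mul_sum]
      _ = - ∑ k, (∑ x, h k x * ν x) ^ 2 := by
          rw [← Finset.sum_neg_distrib]
          refine Finset.sum_congr rfl fun k _ => ?_
          have : ∑ i, h i k * ν i = - ∑ x, h k x * ν x := by
            rw [← Finset.sum_neg_distrib]
            exact Finset.sum_congr rfl fun i _ => by rw [hsk i k]; ring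
          rw [this]; ring
  rw [tr2, trP]; ring
end
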